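/- arXiv:math/0507175 — 5 statements merged into one kernel-verified Lean document; each statement's English description precedes it below -/
import Mathlib

section
/- (Howlett) Let (W, S) be a Coxeter system, let J, K ⊆ S, and let w̄ ∈ ᴶW ∩ Wᴷ. Set K' = K ∩ (w̄⁻¹ J w̄). Then every element w of the double coset W_J · w̄ · W_K can be uniquely written in the form w = u · w̄ · v with u ∈ W_J and v ∈ W_K ∩ ᴷ'W; moreover, for this decomposition one has w̄ · v ∈ ᴶW and ℓ(w) = ℓ(u) + ℓ(w̄) + ℓ(v). -/
open CoxeterSystem

variable {B W : Type*} [Group W] {M : CoxeterMatrix B}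

/-- The strong Bruhat order on a Coxeter group: the reflexive-transitive closure of the
relation relating `a` to `a * t` where `t` is a reflection and the length increases. -/
def bruhatLE (cs : CoxeterSystem M W) (u v : W) : Prop :=
  Relation.ReflTransGen
    (fun a b => ∃ t : W, cs.IsReflection t ∧ b = a * t ∧ cs.length a < cs.length b) u v

/-- `ᴶW`: the set of `w` with `ℓ(s w) > ℓ(w)` for all `s ∈ J`, i.e. the minimal length
representatives of the cosets `W_J \ W`. Here `J` is a set of simple reflections of `W`. -/
def minLeft (cs : CoxeterSystem M W) (J : Set W) : Set W :=
  {w | ∀ s ∈ J, cs.length w < cs.length (s * w)}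

/-- `Wᴶ`: the set of `w` with `ℓ(w s) > ℓ(w)` for all `s ∈ J`, i.e. the minimal length
representatives of the cosets `W / W_J`. -/
def minRight (cs : CoxeterSystem M W) (J : Set W) : Set W :=
  {w | ∀ s ∈ J, cs.length w < cs.length (w * s)}

namespace HowlettAux


open scoped Classical

variable {B W : Type*} [Group W] {M : CoxeterMatrix B} (cs : CoxeterSystem M W)

local prefix:100 "s" => cs.simple
local prefix:100 "π" => cs.wordProd
local prefix:100 "ℓ" => cs.length

private lemma simple_conj_simple_iff (i : B) (t : W) :
    s i * t * s i = s i ↔ t = s i := by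
  constructor
  · intro h
    have := congrArg (fun x => s i * x * s i) h
    simpa [mul_assoc, cs.simple_mul_simple_cancel_left] using this
  · rintro rfl
    simp [cs.simple_mul_simple_self, mul_assoc]

/-- One step of the parity permutation representation. -/
noncomputable def pstep (i : B) : Equiv.Perm (W × ZMod 2) :=
  Function.Involutive.toPerm
    (fun p => (s i * p.1 * s i, p.2 + if p.1 = s i then 1 else 0))
    (by
      rintro ⟨u, z⟩
      simp only
      refine Prod.ext ?_ ?_
      · show s i * (s i * u * s i) * s i = u
        have h1 : s i * (s i * u * s i) * s i = (s i * s i) * u * (s i * s i) := by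
          group
        rw [h1, cs.simple_mul_simple_self]
        group
      · show z + (if u = s i then 1 else 0) + (if s i * u * s i = s i then 1 else 0) = z
        rw [if_congr (simple_conj_simple_iff cs i u) rfl rfl]
        have h11 : (1 : ZMod 2) + 1 = 0 := by decide
        split_ifs with h
        · rw [add_assoc, h11, add_zero]
        · rw [add_zero, add_zero])

@[simp] lemma pstep_apply (i : B) (u : W) (z : ZMod 2) :
    pstep cs i (u, z) = (s i * u * s i, z + if u = s i then 1 else 0) := by
  rfl

private lemma shift1 (i i' : B) (m : ℕ) :
    s i' * (s i * s i') ^ m = (s i' * s i) ^ m * s i' := by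
  induction m with
  | zero => simp
  | succ m ih =>
    calc s i' * (s i * s i') ^ (m + 1)
        = (s i' * s i) * (s i' * (s i * s i') ^ m) := by
          rw [pow_succ']; simp only [mul_assoc]
      _ = (s i' * s i) * ((s i' * s i) ^ m * s i') := by rw [ih]
      _ = (s i' * s i) ^ (m + 1) * s i' := by rw [pow_succ']; simp only [mul_assoc]

private lemma inv_pow_sm (i i' : B) (m : ℕ) :
    ((s i * s i') ^ m)⁻¹ = (s i' * s i) ^ m := by
  rw [← inv_pow, mul_inv_rev, cs.inv_simple, cs.inv_simple]

private lemma eq_shift (x y c e u : W) (h : x⁻¹ * c * y⁻¹ = e) :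
    (x * u * y = c) ↔ (u = e) := by
  subst h
  constructor
  · intro h
    rw [← h]; group
  · intro h
    rw [h]; group

private lemma cond_even (i i' : B) (k : ℕ) (u : W) :
    ((s i * s i') ^ k * u * ((s i' * s i) ^ k) = s i')
      ↔ (u = (s i' * s i) ^ (2 * k) * s i') := by
  apply eq_shift
  rw [inv_pow_sm cs, inv_pow_sm cs i' i, two_mul, pow_add, mul_assoc, mul_assoc]
  congr 1
  rw [shift1 cs]

private lemma cond_odd (i i' : B) (k : ℕ) (u : W) :
    (s i' * ((s i * s i') ^ k * u * ((s i' * s i) ^ k)) * s i' = s i)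
      ↔ (u = (s i' * s i) ^ (2 * k + 1) * s i') := by
  have h1 : (s i' * ((s i * s i') ^ k * u * ((s i' * s i) ^ k)) * s i')
      = (s i' * (s i * s i') ^ k) * u * ((s i' * s i) ^ k * s i') := by
    simp only [mul_assoc]
  rw [h1]
  apply eq_shift
  rw [mul_inv_rev, mul_inv_rev, inv_pow_sm cs i i', inv_pow_sm cs i' i, cs.inv_simple]
  rw [pow_succ, two_mul, pow_add]
  simp only [mul_assoc]
  -- goal : B * (s i' * (s i * (s i' * A))) = B * (B * (s i' * (s i * s i')))
  rw [shift1 cs i i', ← mul_assoc (s i) ((s i' * s i) ^ k) (s i'), shift1 cs i' i,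
    mul_assoc ((s i * s i') ^ k) (s i) (s i'),
    ← mul_assoc (s i') ((s i * s i') ^ k) (s i * s i'), shift1 cs i i',
    mul_assoc ((s i' * s i) ^ k) (s i') (s i * s i')]

private lemma pstep_mul_pow_apply (i i' : B) (k : ℕ) (u : W) (z : ZMod 2) :
    ((pstep cs i * pstep cs i') ^ k) (u, z) =
      ((s i * s i') ^ k * u * (s i' * s i) ^ k,
        z + ∑ j ∈ Finset.range (2 * k),
          if u = (s i' * s i) ^ j * s i' then 1 else 0) := by
  induction k with
  | zero => simp
  | succ k ih =>
    rw [pow_succ', Equiv.Perm.mul_apply, ih]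
    rw [Equiv.Perm.mul_apply, pstep_apply, pstep_apply]
    have h2k : 2 * (k + 1) = (2 * k + 1) + 1 := by ring
    rw [h2k, Finset.sum_range_succ, Finset.sum_range_succ]
    refine Prod.ext ?_ ?_
    · show s i * (s i' * ((s i * s i') ^ k * u * (s i' * s i) ^ k) * s i') * s i
        = (s i * s i') ^ (k + 1) * u * (s i' * s i) ^ (k + 1)
      rw [pow_succ' (s i * s i'), pow_succ (s i' * s i)]
      simp only [mul_assoc]
    · show (z + ∑ j ∈ Finset.range (2 * k),
            if u = (s i' * s i) ^ j * s i' then 1 else 0)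
          + (if (s i * s i') ^ k * u * (s i' * s i) ^ k = s i' then 1 else 0)
          + (if s i' * ((s i * s i') ^ k * u * (s i' * s i) ^ k) * s i' = s i then 1 else 0)
          = z + ((∑ j ∈ Finset.range (2 * k),
            if u = (s i' * s i) ^ j * s i' then 1 else 0)
          + (if u = (s i' * s i) ^ (2 * k) * s i' then 1 else 0)
          + (if u = (s i' * s i) ^ (2 * k + 1) * s i' then 1 else 0))
      rw [if_congr (cond_even cs i i' k u) rfl rfl,
        if_congr (cond_odd cs i i' k u) rfl rfl]
      ring

lemma pstep_liftable : M.IsLiftable (pstep cs) := by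
  intro i i'
  apply Equiv.ext
  rintro ⟨u, z⟩
  rw [Equiv.Perm.coe_one, id_eq, pstep_mul_pow_apply]
  refine Prod.ext ?_ ?_
  · show (s i * s i') ^ M i i' * u * (s i' * s i) ^ M i i' = u
    rw [cs.simple_mul_simple_pow, cs.simple_mul_simple_pow']
    group
  · show z + _ = z
    have hper : ∀ j : ℕ,
        ((if u = (s i' * s i) ^ (M i i' + j) * s i' then (1 : ZMod 2) else 0)
          = if u = (s i' * s i) ^ j * s i' then 1 else 0) := by
      intro j
      rw [add_comm (M i i') j, pow_add, cs.simple_mul_simple_pow', mul_one]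
    have h2 : 2 * M i i' = M i i' + M i i' := by ring
    rw [h2, Finset.sum_range_add]
    simp only [hper]
    have : ∀ a : ZMod 2, a + a = 0 := by decide
    rw [← Finset.sum_add_distrib]
    simp only [this, Finset.sum_const_zero, add_zero]

/-- The parity permutation representation. -/
noncomputable def prep : W →* Equiv.Perm (W × ZMod 2) :=
  cs.lift ⟨pstep cs, pstep_liftable cs⟩

@[simp] lemma prep_simple (i : B) : prep cs (s i) = pstep cs i :=
  cs.lift_apply_simple (pstep_liftable cs) i

/-- Parity of the number of occurrences of a reflection conjugate in words for `w`. -/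
noncomputable def eta (w u : W) : ZMod 2 := ((prep cs w) (u, 0)).2

lemma prep_apply (w : W) : ∀ (u : W) (z : ZMod 2),
    prep cs w (u, z) = (w * u * w⁻¹, z + eta cs w u) := by
  induction w using cs.simple_induction_left with
  | one =>
    intro u z
    have h1 : prep cs (1 : W) = 1 := map_one _
    simp [eta, h1]
  | mul_simple_left w i ih =>
    intro u z
    have hmul : prep cs (s i * w) = prep cs (s i) * prep cs w := map_mul _ _ _
    have key : ∀ z' : ZMod 2, prep cs (s i * w) (u, z') =
        (s i * w * u * (s i * w)⁻¹,
          z' + (eta cs w u + if w * u * w⁻¹ = s i then 1 else 0)) := by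
      intro z'
      rw [hmul, Equiv.Perm.mul_apply, ih u z', prep_simple, pstep_apply]
      refine Prod.ext ?_ ?_
      · show s i * (w * u * w⁻¹) * s i = s i * w * u * (s i * w)⁻¹
        rw [mul_inv_rev, cs.inv_simple]
        group
      · show z' + eta cs w u + _ = z' + _
        ring
    have heta : eta cs (s i * w) u
        = eta cs w u + if w * u * w⁻¹ = s i then 1 else 0 := by
      unfold eta
      rw [key 0, zero_add]
      rfl
    rw [key z, heta]


lemma eta_mul (x y u : W) :
    eta cs (x * y) u = eta cs y u + eta cs x (y * u * y⁻¹) := by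
  unfold eta
  rw [map_mul, Equiv.Perm.mul_apply, prep_apply cs y u 0, zero_add,
    prep_apply cs x (y * u * y⁻¹) (eta cs y u)]
  rfl

lemma eta_simple (i : B) (u : W) :
    eta cs (s i) u = if u = s i then 1 else 0 := by
  unfold eta
  rw [prep_simple, pstep_apply, zero_add]

lemma eta_one (u : W) : eta cs 1 u = 0 := by
  unfold eta
  rw [map_one]
  rfl

lemma leftInvSeq_cons (i : B) (ω : List B) :
    cs.leftInvSeq (i :: ω) = s i :: List.map (⇑(MulAut.conj (s i))) (cs.leftInvSeq ω) :=
  rfl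

lemma count_lis (ω : List B) (t : W) :
    ((cs.leftInvSeq ω).count t : ZMod 2) = eta cs (π ω) ((π ω)⁻¹ * t * (π ω)) := by
  induction ω generalizing t with
  | nil =>
    simp only [leftInvSeq_nil, List.count_nil, Nat.cast_zero, wordProd_nil]
    rw [eta_one]
  | cons i ω ih =>
    rw [leftInvSeq_cons]
    have hconj : t = (MulAut.conj (s i)) (s i * t * s i) := by
      simp only [MulAut.conj_apply, cs.inv_simple]
      rw [← mul_assoc, ← mul_assoc, cs.simple_mul_simple_self]
      rw [mul_assoc, cs.simple_mul_simple_self]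
      group
    have hcount : ((s i :: List.map (⇑(MulAut.conj (s i))) (cs.leftInvSeq ω)).count t)
        = (cs.leftInvSeq ω).count (s i * t * s i) + if t = s i then 1 else 0 := by
      rw [List.count_cons]
      congr 1
      · conv_lhs => rw [hconj]
        exact List.count_map_of_injective _ _ (MulEquiv.injective _) _
      · simp only [beq_iff_eq]
        by_cases h : t = s i
        · rw [if_pos h, if_pos h.symm]
        · rw [if_neg h, if_neg (fun hh => h hh.symm)]
    rw [hcount]
    push_cast
    rw [ih]
    rw [wordProd_cons]
    have hinv : (s i * π ω)⁻¹ = (π ω)⁻¹ * s i := by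
      rw [mul_inv_rev, cs.inv_simple]
    rw [hinv]
    have hmul := eta_mul cs (s i) (π ω) ((π ω)⁻¹ * s i * t * (s i * π ω))
    have harg : (π ω)⁻¹ * s i * t * (s i * π ω) = (π ω)⁻¹ * (s i * t * s i) * π ω := by
      simp only [mul_assoc]
    have harg2 : π ω * ((π ω)⁻¹ * (s i * t * s i) * π ω) * (π ω)⁻¹ = s i * t * s i := by
      group
    rw [hmul, harg, harg2, eta_simple]
    rw [if_congr (simple_conj_simple_iff cs i t) rfl rfl]

lemma eta_refl_self (t : W) (ht : cs.IsReflection t) : eta cs t t = 1 := by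
  obtain ⟨u, i, rfl⟩ := ht
  set t := u * s i * u⁻¹ with hdef
  have h1 : t = u * (s i * u⁻¹) := by rw [hdef]; group
  have e1 : eta cs t t = eta cs (s i * u⁻¹) t + eta cs u ((s i * u⁻¹) * t * (s i * u⁻¹)⁻¹) := by
    have := eta_mul cs u (s i * u⁻¹) t
    rw [← h1] at this
    exact this
  have harg1 : (s i * u⁻¹) * t * (s i * u⁻¹)⁻¹ = s i := by
    rw [hdef]; group
  have e2 : eta cs (s i * u⁻¹) t = eta cs u⁻¹ t + 1 := by
    rw [eta_mul cs (s i) u⁻¹ t]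
    have harg2 : u⁻¹ * t * u⁻¹⁻¹ = s i := by
      rw [hdef, inv_inv]
      simp only [mul_assoc, inv_mul_cancel_left, inv_mul_cancel, mul_one]
    rw [harg2, eta_simple, if_pos rfl]
  have e3 : eta cs u⁻¹ t + eta cs u (s i) = 0 := by
    have := eta_mul cs u u⁻¹ t
    rw [mul_inv_cancel, eta_one] at this
    have harg3 : u⁻¹ * t * u⁻¹⁻¹ = s i := by
      rw [hdef, inv_inv]
      simp only [mul_assoc, inv_mul_cancel_left, inv_mul_cancel, mul_one]
    rw [harg3] at this
    exact this.symm
  rw [e1, harg1, e2]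
  have : eta cs u⁻¹ t + 1 + eta cs u (s i) = (eta cs u⁻¹ t + eta cs u (s i)) + 1 := by ring
  rw [this, e3, zero_add]

lemma eta_refl_mul (t x : W) (ht : cs.IsReflection t) :
    eta cs (t * x) (x⁻¹ * t * x) = 1 + eta cs x (x⁻¹ * t * x) := by
  rw [eta_mul cs t x (x⁻¹ * t * x)]
  have harg : x * (x⁻¹ * t * x) * x⁻¹ = t := by
    simp only [mul_assoc, mul_inv_cancel_left, mul_inv_cancel, mul_one]
  rw [harg, eta_refl_self cs t ht]
  ring

/-- The strong exchange property. -/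
lemma strongExchange (ω : List B) (t : W) (ht : cs.IsReflection t)
    (hl : ℓ (t * π ω) < ℓ (π ω)) : t ∈ cs.leftInvSeq ω := by
  have h01 : ∀ a : ZMod 2, a = 0 ∨ a = 1 := by decide
  have hmem : ∀ τ : List B, eta cs (π τ) ((π τ)⁻¹ * t * π τ) = 1 → t ∈ cs.leftInvSeq τ := by
    intro τ hτ
    by_contra hn
    rw [← count_lis] at hτ
    rw [List.count_eq_zero_of_not_mem hn] at hτ
    simp at hτ
  apply hmem
  rcases h01 (eta cs (π ω) ((π ω)⁻¹ * t * π ω)) with h0 | h1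
  · exfalso
    set y := t * π ω with hy
    have hπ : π ω = t * y := by
      rw [hy, ← mul_assoc, ht.mul_self, one_mul]
    have hflip := eta_refl_mul cs t y ht
    have htt : t * (t * (t * y)) = t * y := by rw [← mul_assoc, ht.mul_self, one_mul]
    have he : (π ω)⁻¹ * t * π ω = y⁻¹ * t * y := by
      calc (π ω)⁻¹ * t * π ω = y⁻¹ * (t * (t * (t * y))) := by
            rw [hπ, mul_inv_rev, ht.inv]; simp only [mul_assoc]
        _ = y⁻¹ * (t * y) := by rw [htt]
        _ = y⁻¹ * t * y := (mul_assoc _ _ _).symm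
    rw [← hπ] at hflip
    rw [he, hflip] at h0
    have h1y : eta cs y (y⁻¹ * t * y) = 1 := by
      rcases h01 (eta cs y (y⁻¹ * t * y)) with hh | hh
      · rw [hh] at h0; simp at h0
      · exact hh
    obtain ⟨ω', hred', hy'⟩ := cs.exists_reduced_word' y
    rw [hy'] at h1y
    have hmem' := hmem ω' h1y
    have hinv := (cs.isLeftInversion_of_mem_leftInvSeq hred' hmem').2
    rw [← hy'] at hinv
    rw [hy, ← mul_assoc, ht.mul_self, one_mul] at hinv
    rw [← hy] at hinv
    omega
  · exact h1

/-- The strong exchange property, `eraseIdx` form. -/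
lemma strongExchange' (ω : List B) (t : W) (ht : cs.IsReflection t)
    (hl : ℓ (t * π ω) < ℓ (π ω)) :
    ∃ j, j < ω.length ∧ t * π ω = π (ω.eraseIdx j) := by
  have hmem := strongExchange cs ω t ht hl
  obtain ⟨j, hj, hget⟩ := List.mem_iff_getElem.mp hmem
  rw [cs.length_leftInvSeq] at hj
  refine ⟨j, hj, ?_⟩
  have hgd : (cs.leftInvSeq ω).getD j 1 = t := by
    rw [List.getD_eq_getElem _ 1 (by rw [cs.length_leftInvSeq]; exact hj)]
    exact hget
  rw [← hgd]
  exact cs.getD_leftInvSeq_mul_wordProd ω j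

/-! ### Right exchange and reduced subwords -/

lemma rightExchange (ω : List B) (i : B) (h : ℓ (π ω * s i) < ℓ (π ω)) :
    ∃ τ : List B, π τ = π ω * s i ∧ τ.length + 1 = ω.length ∧ ∀ x ∈ τ, x ∈ ω := by
  have h1 : ℓ (s i * π ω.reverse) < ℓ (π ω.reverse) := by
    rw [cs.wordProd_reverse]
    have e1 : s i * (π ω)⁻¹ = (π ω * s i)⁻¹ := by
      rw [mul_inv_rev, cs.inv_simple]
    rw [e1, cs.length_inv, cs.length_inv]
    exact h
  obtain ⟨j, hj, heq⟩ := strongExchange' cs ω.reverse (s i) (cs.isReflection_simple i) h1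
  refine ⟨(ω.reverse.eraseIdx j).reverse, ?_, ?_, ?_⟩
  · rw [cs.wordProd_reverse, ← heq, cs.wordProd_reverse, mul_inv_rev, inv_inv, cs.inv_simple]
  · rw [List.length_reverse]
    have := List.length_eraseIdx_add_one (l := ω.reverse) (i := j) hj
    rw [List.length_reverse] at this
    exact this
  · intro x hx
    rw [List.mem_reverse] at hx
    have := (List.eraseIdx_sublist ω.reverse j).subset hx
    rwa [List.mem_reverse] at this

lemma exists_reduced_subword : ∀ (n : ℕ) (ω : List B), ω.length ≤ n →
    ∃ τ, cs.IsReduced τ ∧ π τ = π ω ∧ ∀ x ∈ τ, x ∈ ω := by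
  intro n
  induction n with
  | zero =>
    intro ω hω
    have : ω = [] := List.eq_nil_of_length_eq_zero (Nat.le_zero.mp hω)
    subst this
    exact ⟨[], by simp [CoxeterSystem.IsReduced], rfl, by simp⟩
  | succ n ihn =>
    intro ω hω
    by_cases hred : cs.IsReduced ω
    · exact ⟨ω, hred, rfl, fun x hx => hx⟩
    · have hQ : ∃ m, ¬ cs.IsReduced (ω.take m) := ⟨ω.length, by rwa [List.take_length]⟩
      have hspec : ¬ cs.IsReduced (ω.take (Nat.find hQ)) := Nat.find_spec hQ
      set n₀ := Nat.find hQ with hn₀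
      have hn₀pos : 1 ≤ n₀ := by
        rcases Nat.eq_zero_or_pos n₀ with h | h
        · exfalso; apply hspec; rw [h]; simp [CoxeterSystem.IsReduced]
        · exact h
      have hn₀le : n₀ ≤ ω.length := Nat.find_min' hQ (by rwa [List.take_length])
      set j := n₀ - 1 with hjdef
      have hjlt : j < ω.length := by omega
      have hredj : cs.IsReduced (ω.take j) := by
        by_contra hcon
        exact (Nat.find_min hQ (show j < n₀ by omega)) hcon
      have hjn : j + 1 = n₀ := by omega
      have htake : ω.take (j+1) = ω.take j ++ [ω[j]] := by
        rw [List.take_succ, List.getElem?_eq_getElem hjlt]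
        rfl
      have hlentakej : (ω.take j).length = j := by
        rw [List.length_take]; omega
      have hlj : ℓ (π (ω.take j)) = j := by
        have := hredj
        unfold CoxeterSystem.IsReduced at this
        rw [hlentakej] at this
        exact this
      have hprod : π (ω.take (j+1)) = π (ω.take j) * s (ω[j]) := by
        rw [htake, cs.wordProd_append, cs.wordProd_singleton]
      have hnotred : ℓ (π (ω.take j) * s (ω[j])) ≠ j + 1 := by
        intro hcon
        apply hspec
        rw [← hjn]
        unfold CoxeterSystem.IsReduced
        rw [hprod, hcon, List.length_take]
        omega
      have hdesc : ℓ (π (ω.take j) * s (ω[j])) < ℓ (π (ω.take j)) := by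
        rcases cs.length_mul_simple (π (ω.take j)) (ω[j]) with h | h <;> omega
      obtain ⟨τ', hτ'eq, hτ'len, hτ'sub⟩ := rightExchange cs (ω.take j) (ω[j]) hdesc
      have hprodall : π (τ' ++ ω.drop (j+1)) = π ω := by
        rw [cs.wordProd_append, hτ'eq, ← hprod, ← cs.wordProd_append, List.take_append_drop]
      have hlenall : (τ' ++ ω.drop (j+1)).length ≤ n := by
        rw [List.length_append, List.length_drop]
        rw [hlentakej] at hτ'len
        omega
      obtain ⟨τ, hτred, hτeq, hτsub⟩ := ihn (τ' ++ ω.drop (j+1)) hlenall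
      refine ⟨τ, hτred, by rw [hτeq, hprodall], ?_⟩
      intro x hx
      rcases List.mem_append.mp (hτsub x hx) with h | h
      · exact List.take_subset j ω (hτ'sub x h)
      · exact List.drop_subset (j+1) ω h

/-! ### Standard parabolic subgroups -/

lemma wordProd_mem_closure {I : Set B} (ω : List B) (hω : ∀ x ∈ ω, x ∈ I) :
    π ω ∈ Subgroup.closure (cs.simple '' I) := by
  induction ω with
  | nil =>
    rw [cs.wordProd_nil]
    exact one_mem _
  | cons i ω ih =>
    rw [cs.wordProd_cons]
    exact mul_mem (Subgroup.subset_closure ⟨i, hω i (by simp), rfl⟩)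
      (ih fun x hx => hω x (List.mem_cons_of_mem i hx))

lemma exists_word_of_mem_closure {I : Set B} {w : W}
    (hw : w ∈ Subgroup.closure (cs.simple '' I)) :
    ∃ ω : List B, (∀ x ∈ ω, x ∈ I) ∧ w = π ω := by
  induction hw using Subgroup.closure_induction with
  | mem x hx =>
    obtain ⟨i, hi, rfl⟩ := hx
    exact ⟨[i], by simpa using hi, (cs.wordProd_singleton i).symm⟩
  | one => exact ⟨[], by simp, by rw [cs.wordProd_nil]⟩
  | mul x y hx hy ihx ihy =>
    obtain ⟨ω₁, h1, rfl⟩ := ihx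
    obtain ⟨ω₂, h2, rfl⟩ := ihy
    refine ⟨ω₁ ++ ω₂, ?_, (cs.wordProd_append ω₁ ω₂).symm⟩
    intro x hx
    rcases List.mem_append.mp hx with h | h
    exacts [h1 x h, h2 x h]
  | inv x hx ihx =>
    obtain ⟨ω, h1, rfl⟩ := ihx
    exact ⟨ω.reverse, fun x hx => h1 x (List.mem_reverse.mp hx),
      (cs.wordProd_reverse ω).symm⟩

lemma exists_reduced_word_mem {I : Set B} {w : W}
    (hw : w ∈ Subgroup.closure (cs.simple '' I)) :
    ∃ ω : List B, (∀ x ∈ ω, x ∈ I) ∧ cs.IsReduced ω ∧ w = π ω := by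
  obtain ⟨ω₀, hsub, rfl⟩ := exists_word_of_mem_closure cs hw
  obtain ⟨τ, hred, heq, hτsub⟩ := exists_reduced_subword cs ω₀.length ω₀ le_rfl
  exact ⟨τ, fun x hx => hsub x (hτsub x hx), hred, heq.symm⟩

lemma exists_simple_descent_closure {I : Set B} {w : W}
    (hw : w ∈ Subgroup.closure (cs.simple '' I)) (hne : w ≠ 1) :
    ∃ i ∈ I, ℓ (s i * w) < ℓ w ∧ s i * w ∈ Subgroup.closure (cs.simple '' I) := by
  obtain ⟨ω, hsub, hred, rfl⟩ := exists_reduced_word_mem cs hw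
  cases ω with
  | nil => exact absurd (cs.wordProd_nil) hne
  | cons i ω' =>
    have hcan : s i * π (i :: ω') = π ω' := by
      rw [cs.wordProd_cons, cs.simple_mul_simple_cancel_left]
    refine ⟨i, hsub i (by simp), ?_, ?_⟩
    · rw [hcan]
      have h1 : ℓ (π ω') ≤ ω'.length := cs.length_wordProd_le _
      have h2 : ℓ (π (i :: ω')) = ω'.length + 1 := by
        have := hred
        unfold CoxeterSystem.IsReduced at this
        rw [this, List.length_cons]
      omega
    · rw [hcan]
      exact wordProd_mem_closure cs ω' (fun x hx => hsub x (List.mem_cons_of_mem i hx))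

/-- `v` is shortest in its coset `W_I v`, reflection form. -/
def ReflMin (I : Set B) (v : W) : Prop :=
  ∀ t : W, cs.IsReflection t → t ∈ Subgroup.closure (cs.simple '' I) → ℓ v < ℓ (t * v)

lemma reflMin_length_mul {I : Set B} {v : W} (hv : ReflMin cs I v) :
    ∀ c ∈ Subgroup.closure (cs.simple '' I), ℓ (c * v) = ℓ c + ℓ v := by
  suffices h : ∀ (n : ℕ) (c : W), c ∈ Subgroup.closure (cs.simple '' I) → ℓ c = n →
      ℓ (c * v) = ℓ c + ℓ v by
    intro c hc
    exact h (ℓ c) c hc rfl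
  intro n
  induction n using Nat.strong_induction_on with
  | _ n ih =>
  intro c hc hlen
  rcases eq_or_ne c 1 with rfl | hne
  · simp
  · obtain ⟨i, hiI, hdesc, hmem⟩ := exists_simple_descent_closure cs hc hne
    have hlen' : ℓ (s i * c) + 1 = ℓ c := by
      rcases cs.length_simple_mul c i with h | h <;> omega
    set c' := s i * c with hc'
    have hcc : c = s i * c' := by rw [hc', cs.simple_mul_simple_cancel_left]
    have ihc' : ℓ (c' * v) = ℓ c' + ℓ v := ih (ℓ c') (by omega) c' hmem rfl
    have hnotdesc : ¬ ℓ (s i * (c' * v)) < ℓ (c' * v) := by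
      intro hcon
      obtain ⟨ω₁, hsub₁, hred₁, hw₁⟩ := exists_reduced_word_mem cs hmem
      obtain ⟨ω₂, hred₂, hw₂⟩ := cs.exists_reduced_word' v
      have hl₁ : ℓ c' = ω₁.length := by rw [hw₁]; exact hred₁
      have hl₂ : ℓ v = ω₂.length := by rw [hw₂]; exact hred₂
      have hlt : ℓ (s i * π (ω₁ ++ ω₂)) < ℓ (π (ω₁ ++ ω₂)) := by
        rw [cs.wordProd_append, ← hw₁, ← hw₂]
        exact hcon
      obtain ⟨j, hjlt, heq⟩ := strongExchange' cs (ω₁ ++ ω₂) (s i)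
        (cs.isReflection_simple i) hlt
      rw [List.length_append] at hjlt
      by_cases hcase : j < ω₁.length
      · rw [List.eraseIdx_append_of_lt_length hcase] at heq
        simp only [cs.wordProd_append] at heq
        rw [← hw₁, ← hw₂, ← mul_assoc] at heq
        have heq2 : s i * c' = π (ω₁.eraseIdx j) := mul_right_cancel heq
        have hlb : ℓ (s i * c') ≤ (ω₁.eraseIdx j).length := by
          rw [heq2]; exact cs.length_wordProd_le _
        have hlb2 := List.length_eraseIdx_add_one hcase
        have hcceq : ℓ (s i * c') = ℓ c := by rw [← hcc]
        omega
      · push_neg at hcase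
        rw [List.eraseIdx_append_of_length_le hcase] at heq
        simp only [cs.wordProd_append] at heq
        rw [← hw₁, ← hw₂] at heq
        have htv : (c'⁻¹ * s i * c') * v = π (ω₂.eraseIdx (j - ω₁.length)) := by
          have h5 := congrArg (fun x => c'⁻¹ * x) heq
          rw [inv_mul_cancel_left] at h5
          rw [← h5]; group
        have hrefl : cs.IsReflection (c'⁻¹ * s i * c') := ⟨c'⁻¹, i, by rw [inv_inv]⟩
        have htmem : c'⁻¹ * s i * c' ∈ Subgroup.closure (cs.simple '' I) :=
          mul_mem (mul_mem (inv_mem hmem) (Subgroup.subset_closure ⟨i, hiI, rfl⟩)) hmem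
        have hj2 : j - ω₁.length < ω₂.length := by omega
        have hlt2 : ℓ ((c'⁻¹ * s i * c') * v) < ℓ v := by
          rw [htv]
          have h1 : ℓ (π (ω₂.eraseIdx (j - ω₁.length))) ≤ (ω₂.eraseIdx (j - ω₁.length)).length :=
            cs.length_wordProd_le _
          have h2 := List.length_eraseIdx_add_one hj2
          omega
        exact absurd (hv _ hrefl htmem) (by omega)
    have hor := cs.length_simple_mul (c' * v) i
    have hle : ℓ (c' * v) ≤ ℓ (s i * (c' * v)) := le_of_not_gt hnotdesc
    conv_lhs => rw [hcc, mul_assoc]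
    rcases hor with h | h <;> omega

lemma exists_reflMin_decomp (I : Set B) (w : W) :
    ∃ c v : W, c ∈ Subgroup.closure (cs.simple '' I) ∧ ReflMin cs I v ∧ w = c * v ∧
      ℓ w = ℓ c + ℓ v := by
  have hex : ∃ n, ∃ c, c ∈ Subgroup.closure (cs.simple '' I) ∧ ℓ (c * w) = n :=
    ⟨ℓ w, 1, one_mem _, by rw [one_mul]⟩
  obtain ⟨c₀, hc₀, hc₀len⟩ := Nat.find_spec hex
  have hmin : ReflMin cs I (c₀ * w) := by
    intro t ht htmem
    have hge : Nat.find hex ≤ ℓ (t * (c₀ * w)) :=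
      Nat.find_min' hex ⟨t * c₀, mul_mem htmem hc₀, by rw [mul_assoc]⟩
    have hne := ht.length_mul_right_ne (c₀ * w)
    omega
  refine ⟨c₀⁻¹, c₀ * w, inv_mem hc₀, hmin, by group, ?_⟩
  have h := reflMin_length_mul cs hmin c₀⁻¹ (inv_mem hc₀)
  rw [inv_mul_cancel_left] at h
  exact h

lemma reflMin_of_simple_min {I : Set B} {v : W} (hv : ∀ i ∈ I, ℓ v < ℓ (s i * v)) :
    ReflMin cs I v := by
  obtain ⟨c, v', hc, hv', heq, hlen⟩ := exists_reflMin_decomp cs I v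
  rcases eq_or_ne c 1 with rfl | hne
  · rw [one_mul] at heq
    rw [heq]
    exact hv'
  · exfalso
    obtain ⟨i, hiI, hdesc, hmem⟩ := exists_simple_descent_closure cs hc hne
    have h1 : ℓ ((s i * c) * v') = ℓ (s i * c) + ℓ v' := reflMin_length_mul cs hv' _ hmem
    have h2 : s i * v = (s i * c) * v' := by rw [heq]; group
    have h3 : ℓ (s i * v) < ℓ v := by
      rw [h2, h1]
      omega
    exact absurd (hv i hiI) (by omega)

lemma decomp_unique {I : Set B} {c₁ c₂ v₁ v₂ : W}
    (hc₁ : c₁ ∈ Subgroup.closure (cs.simple '' I)) (hc₂ : c₂ ∈ Subgroup.closure (cs.simple '' I))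
    (hv₁ : ReflMin cs I v₁) (hv₂ : ReflMin cs I v₂) (heq : c₁ * v₁ = c₂ * v₂) :
    c₁ = c₂ ∧ v₁ = v₂ := by
  have he1 : (c₂⁻¹ * c₁) * v₁ = v₂ := by
    rw [mul_assoc, heq]; group
  have he2 : (c₁⁻¹ * c₂) * v₂ = v₁ := by
    rw [mul_assoc, ← heq]; group
  have hm1 : c₂⁻¹ * c₁ ∈ Subgroup.closure (cs.simple '' I) := mul_mem (inv_mem hc₂) hc₁
  have hm2 : c₁⁻¹ * c₂ ∈ Subgroup.closure (cs.simple '' I) := mul_mem (inv_mem hc₁) hc₂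
  have l1 : ℓ v₂ = ℓ (c₂⁻¹ * c₁) + ℓ v₁ := by
    rw [← he1]; exact reflMin_length_mul cs hv₁ _ hm1
  have l2 : ℓ v₁ = ℓ (c₁⁻¹ * c₂) + ℓ v₂ := by
    rw [← he2]; exact reflMin_length_mul cs hv₂ _ hm2
  have hz : ℓ (c₂⁻¹ * c₁) = 0 := by omega
  have hone : c₂⁻¹ * c₁ = 1 := cs.length_eq_zero_iff.mp hz
  constructor
  · exact (inv_mul_eq_one.mp hone).symm
  · rw [← he1, hone, one_mul]

/-! ### The key lemma of Howlett's theorem -/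

lemma simple_image_pre {X : Set W} (hX : X ⊆ Set.range cs.simple) :
    cs.simple '' {i | cs.simple i ∈ X} = X := by
  ext x
  constructor
  · rintro ⟨i, hi, rfl⟩
    exact hi
  · intro hx
    obtain ⟨i, rfl⟩ := hX hx
    exact ⟨i, hx, rfl⟩

lemma howlett_key (J K : Set W) (hJ : J ⊆ Set.range cs.simple) (hK : K ⊆ Set.range cs.simple)
    (wb v : W)
    (hJwb : ∀ x ∈ J, ℓ wb < ℓ (x * wb))
    (hKwb : ∀ c ∈ Subgroup.closure K, ℓ (wb * c) = ℓ wb + ℓ c)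
    (hv1 : v ∈ Subgroup.closure K)
    (hv2 : ∀ x ∈ K, wb * x * wb⁻¹ ∈ J → ℓ v < ℓ (x * v)) :
    ∀ x ∈ J, ℓ (wb * v) < ℓ (x * (wb * v)) := by
  intro x hxJ
  obtain ⟨i₀, rfl⟩ := hJ hxJ
  by_contra hcon
  push_neg at hcon
  have hne := cs.length_simple_mul_ne (wb * v) i₀
  have hlt : ℓ (s i₀ * (wb * v)) < ℓ (wb * v) := lt_of_le_of_ne hcon hne
  set KB := {i | cs.simple i ∈ K} with hKB
  have hKeq : cs.simple '' KB = K := simple_image_pre cs hK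
  have hv1' : v ∈ Subgroup.closure (cs.simple '' KB) := by rw [hKeq]; exact hv1
  obtain ⟨ω₂, hsub₂, hred₂, hw₂⟩ := exists_reduced_word_mem cs hv1'
  obtain ⟨ω₁, hred₁, hw₁⟩ := cs.exists_reduced_word' wb
  have hl₁ : ℓ wb = ω₁.length := by rw [hw₁]; exact hred₁
  have hl₂ : ℓ v = ω₂.length := by rw [hw₂]; exact hred₂
  have hwv : ℓ (wb * v) = ℓ wb + ℓ v := hKwb v hv1
  have hlt' : ℓ (s i₀ * π (ω₁ ++ ω₂)) < ℓ (π (ω₁ ++ ω₂)) := by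
    rw [cs.wordProd_append, ← hw₁, ← hw₂]
    exact hlt
  obtain ⟨j, hjlt, heq⟩ := strongExchange' cs (ω₁ ++ ω₂) (s i₀) (cs.isReflection_simple i₀) hlt'
  rw [List.length_append] at hjlt
  by_cases hcase : j < ω₁.length
  · rw [List.eraseIdx_append_of_lt_length hcase] at heq
    simp only [cs.wordProd_append] at heq
    rw [← hw₁, ← hw₂, ← mul_assoc] at heq
    have heq2 : s i₀ * wb = π (ω₁.eraseIdx j) := mul_right_cancel heq
    have h3 : ℓ (s i₀ * wb) ≤ (ω₁.eraseIdx j).length := by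
      rw [heq2]; exact cs.length_wordProd_le _
    have h4 := List.length_eraseIdx_add_one hcase
    have h5 := hJwb (s i₀) hxJ
    omega
  · push_neg at hcase
    rw [List.eraseIdx_append_of_length_le hcase] at heq
    simp only [cs.wordProd_append] at heq
    rw [← hw₁, ← hw₂] at heq
    set t := wb⁻¹ * s i₀ * wb with htdef
    have htv : t * v = π (ω₂.eraseIdx (j - ω₁.length)) := by
      have h5 := congrArg (fun x => wb⁻¹ * x) heq
      rw [inv_mul_cancel_left] at h5
      rw [← h5, htdef]; group
    have hj2 : j - ω₁.length < ω₂.length := by omega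
    have hlt2 : ℓ (t * v) < ℓ v := by
      have h1 := cs.length_wordProd_le (ω₂.eraseIdx (j - ω₁.length))
      have h2 := List.length_eraseIdx_add_one hj2
      rw [htv]; omega
    have htmem : t ∈ Subgroup.closure K := by
      have hmem1 : π (ω₂.eraseIdx (j - ω₁.length)) ∈ Subgroup.closure (cs.simple '' KB) :=
        wordProd_mem_closure cs _ (fun y hy => hsub₂ y ((List.eraseIdx_sublist ω₂ _).subset hy))
      rw [hKeq] at hmem1
      have ht2 : t = π (ω₂.eraseIdx (j - ω₁.length)) * v⁻¹ := by rw [← htv]; group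
      rw [ht2]
      exact mul_mem hmem1 (inv_mem hv1)
    have hwbt : wb * t = s i₀ * wb := by rw [htdef]; group
    have hst : ℓ (s i₀ * wb) = ℓ wb + 1 := by
      have h5 := hJwb (s i₀) hxJ
      rcases cs.length_simple_mul wb i₀ with h | h <;> omega
    have hlt1 : ℓ t = 1 := by
      have h6 := hKwb t htmem
      rw [hwbt, hst] at h6
      omega
    have htK : t ∈ K := by
      have htmem' : t ∈ Subgroup.closure (cs.simple '' KB) := by rw [hKeq]; exact htmem
      obtain ⟨τ, hτsub, hτred, hτeq⟩ := exists_reduced_word_mem cs htmem'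
      have hτl : ℓ t = τ.length := by rw [hτeq]; exact hτred
      obtain ⟨i₂, hτi⟩ := List.length_eq_one_iff.mp (by omega : τ.length = 1)
      subst hτi
      rw [hτeq, cs.wordProd_singleton]
      exact hτsub i₂ (by simp)
    have hconj : wb * t * wb⁻¹ = s i₀ := by rw [htdef]; group
    have h7 := hv2 t htK (by rw [hconj]; exact hxJ)
    omega

end HowlettAux

open HowlettAux

/-- Howlett's lemma: for `w̄ ∈ ᴶW ∩ Wᴷ` and `K' = K ∩ w̄⁻¹ J w̄`, every element of the
double coset `W_J w̄ W_K` can be uniquely written as `u * w̄ * v` with `u ∈ W_J` and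
`v ∈ W_K ∩ ᴷ'W`; moreover then `w̄ * v ∈ ᴶW` and `ℓ(w) = ℓ(u) + ℓ(w̄) + ℓ(v)`. -/
theorem howlett (cs : CoxeterSystem M W) (J K : Set W)
    (hJ : J ⊆ Set.range cs.simple) (hK : K ⊆ Set.range cs.simple)
    (wb : W) (hwb : wb ∈ minLeft cs J ∩ minRight cs K) (w : W)
    (hw : ∃ a ∈ Subgroup.closure J, ∃ b ∈ Subgroup.closure K, w = a * wb * b) :
    (∃! p : W × W, p.1 ∈ Subgroup.closure J ∧ p.2 ∈ Subgroup.closure K ∧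
      p.2 ∈ minLeft cs (K ∩ ((fun x => wb⁻¹ * x * wb) '' J)) ∧ w = p.1 * wb * p.2) ∧
    (∀ u v : W, u ∈ Subgroup.closure J → v ∈ Subgroup.closure K →
      v ∈ minLeft cs (K ∩ ((fun x => wb⁻¹ * x * wb) '' J)) → w = u * wb * v →
      wb * v ∈ minLeft cs J ∧
        cs.length w = cs.length u + cs.length wb + cs.length v) := by
  classical
  obtain ⟨hwbJ', hwbK'⟩ := hwb
  have hwbJ : ∀ x ∈ J, cs.length wb < cs.length (x * wb) := hwbJ'
  have hwbK : ∀ x ∈ K, cs.length wb < cs.length (wb * x) := hwbK'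
  set JB := {i | cs.simple i ∈ J} with hJB
  set KB := {i | cs.simple i ∈ K} with hKB
  have hJeq : cs.simple '' JB = J := simple_image_pre cs hJ
  have hKeq : cs.simple '' KB = K := simple_image_pre cs hK
  set K' : Set W := K ∩ ((fun x => wb⁻¹ * x * wb) '' J) with hK'
  have hK'sub : K' ⊆ K := Set.inter_subset_left
  have hK'r : K' ⊆ Set.range cs.simple := fun x hx => hK (hK'sub hx)
  set K'B := {i | cs.simple i ∈ K'} with hK'B
  have hK'eq : cs.simple '' K'B = K' := simple_image_pre cs hK'r
  -- length additivity on the right of wb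
  have hKwb : ∀ c ∈ Subgroup.closure K, cs.length (wb * c) = cs.length wb + cs.length c := by
    have hinvmin : ∀ i ∈ KB, cs.length wb⁻¹ < cs.length (cs.simple i * wb⁻¹) := by
      intro i hi
      have h1 : cs.simple i * wb⁻¹ = (wb * cs.simple i)⁻¹ := by
        rw [mul_inv_rev, cs.inv_simple]
      rw [h1, cs.length_inv, cs.length_inv]
      exact hwbK (cs.simple i) hi
    have hrm : ReflMin cs KB wb⁻¹ := reflMin_of_simple_min cs hinvmin
    intro c hc
    have hc' : c⁻¹ ∈ Subgroup.closure (cs.simple '' KB) := by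
      rw [hKeq]; exact inv_mem hc
    have h2 := reflMin_length_mul cs hrm c⁻¹ hc'
    have h3 : c⁻¹ * wb⁻¹ = (wb * c)⁻¹ := by group
    rw [h3, cs.length_inv, cs.length_inv, cs.length_inv] at h2
    omega
  -- second bullet first
  have key : ∀ u v : W, u ∈ Subgroup.closure J → v ∈ Subgroup.closure K →
      v ∈ minLeft cs K' → w = u * wb * v →
      wb * v ∈ minLeft cs J ∧
        cs.length w = cs.length u + cs.length wb + cs.length v := by
    intro u v hu hv hvm heqw
    have hvm' : ∀ x ∈ K', cs.length v < cs.length (x * v) := hvm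
    have hminJ : wb * v ∈ minLeft cs J := by
      intro x hx
      exact howlett_key cs J K hJ hK wb v hwbJ hKwb hv
        (fun y hyK hyJ => hvm' y ⟨hyK, ⟨wb * y * wb⁻¹, hyJ, by group⟩⟩) x hx
    refine ⟨hminJ, ?_⟩
    have hminJ' : ∀ x ∈ J, cs.length (wb * v) < cs.length (x * (wb * v)) := hminJ
    have hrmJ : ReflMin cs JB (wb * v) :=
      reflMin_of_simple_min cs (fun i hi => hminJ' (cs.simple i) hi)
    have hu' : u ∈ Subgroup.closure (cs.simple '' JB) := by rw [hJeq]; exact hu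
    have h2 : cs.length (u * (wb * v)) = cs.length u + cs.length (wb * v) :=
      reflMin_length_mul cs hrmJ u hu'
    have h1 : cs.length (wb * v) = cs.length wb + cs.length v := hKwb v hv
    rw [heqw, mul_assoc, h2, h1]
    omega
  -- existence
  obtain ⟨a, ha, b, hb, hweq⟩ := hw
  obtain ⟨c, v, hc, hvrm, hbeq, _⟩ := exists_reflMin_decomp cs K'B b
  have hcK' : c ∈ Subgroup.closure K' := by rw [← hK'eq]; exact hc
  have hcK : c ∈ Subgroup.closure K := (Subgroup.closure_mono hK'sub) hcK'
  have hvK : v ∈ Subgroup.closure K := by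
    have : v = c⁻¹ * b := by rw [hbeq]; group
    rw [this]
    exact mul_mem (inv_mem hcK) hb
  have hvmin : v ∈ minLeft cs K' := by
    intro x hx
    rw [← hK'eq] at hx
    obtain ⟨i, hi, rfl⟩ := hx
    exact hvrm (cs.simple i) (cs.isReflection_simple i)
      (Subgroup.subset_closure ⟨i, hi, rfl⟩)
  have hconjmem : wb * c * wb⁻¹ ∈ Subgroup.closure J := by
    have hmap : ∀ y ∈ Subgroup.closure (cs.simple '' K'B),
        wb * y * wb⁻¹ ∈ Subgroup.closure J := by
      intro y hy
      induction hy using Subgroup.closure_induction with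
      | mem x hx =>
        have hx' : x ∈ K' := by rw [← hK'eq]; exact hx
        obtain ⟨-, ⟨jj, hjJ, hjx⟩⟩ := hx'
        have : wb * x * wb⁻¹ = jj := by rw [← hjx]; group
        rw [this]
        exact Subgroup.subset_closure hjJ
      | one =>
        have : wb * 1 * wb⁻¹ = 1 := by group
        rw [this]; exact one_mem _
      | mul x y hx hy ihx ihy =>
        have : wb * (x * y) * wb⁻¹ = (wb * x * wb⁻¹) * (wb * y * wb⁻¹) := by group
        rw [this]; exact mul_mem ihx ihy
      | inv x hx ihx =>
        have : wb * x⁻¹ * wb⁻¹ = (wb * x * wb⁻¹)⁻¹ := by group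
        rw [this]; exact inv_mem ihx
    exact hmap c hc
  set u : W := a * (wb * c * wb⁻¹) with hu
  have humem : u ∈ Subgroup.closure J := mul_mem ha hconjmem
  have hweq2 : w = u * wb * v := by
    rw [hweq, hbeq, hu]; group
  constructor
  · refine ⟨(u, v), ⟨humem, hvK, hvmin, hweq2⟩, ?_⟩
    rintro ⟨u', v'⟩ ⟨hu'1, hv'1, hv'm, heq'⟩
    have hk1 := key u v humem hvK hvmin hweq2
    have hk2 := key u' v' hu'1 hv'1 hv'm heq'
    have hrm1 : ReflMin cs JB (wb * v) :=
      reflMin_of_simple_min cs (fun i hi => hk1.1 (cs.simple i) hi)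
    have hrm2 : ReflMin cs JB (wb * v') :=
      reflMin_of_simple_min cs (fun i hi => hk2.1 (cs.simple i) hi)
    have hu1' : u ∈ Subgroup.closure (cs.simple '' JB) := by rw [hJeq]; exact humem
    have hu2' : u' ∈ Subgroup.closure (cs.simple '' JB) := by rw [hJeq]; exact hu'1
    have heqq : u' * (wb * v') = u * (wb * v) := by
      rw [← mul_assoc, ← heq', ← mul_assoc, ← hweq2]
    obtain ⟨hueq, hveq⟩ := decomp_unique cs hu2' hu1' hrm2 hrm1 heqq
    have hveq2 : v' = v := mul_left_cancel hveq
    simp only [Prod.mk.injEq]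
    exact ⟨hueq, hveq2⟩
  · exact key
end

section
/- Let (W, S) be a Coxeter system, J, K ⊆ S, and δ : W_J → W_K a group isomorphism with δ(J) = K. If w ∈ ᴶW, w' ∈ W, and w ⪯ w' (i.e. there exists u ∈ W_J with u⁻¹ w δ(u) ≤ w'), then ℓ(w) ≤ ℓ(w'). -/
open CoxeterSystem

variable {B W : Type*} [Group W] {M : CoxeterMatrix B}

/-- `δ` is a group isomorphism from `W_J` onto `W_K` satisfying `δ(J) = K`, encoded as a
function `W → W` restricting to a multiplicative bijection of the subgroup generated by `J`
onto the subgroup generated by `K`, and mapping the set `J` onto the set `K`. -/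
structure IsParabolicIso (J K : Set W) (δ : W → W) : Prop where
  bijOn : Set.BijOn δ (Subgroup.closure J : Set W) (Subgroup.closure K : Set W)
  map_mul : ∀ u ∈ Subgroup.closure J, ∀ v ∈ Subgroup.closure J, δ (u * v) = δ u * δ v
  image_eq : δ '' J = K

/-- The relation `w ⪯ w'`: there exists `u ∈ W_J` with `u⁻¹ * w * δ(u) ≤ w'` in Bruhat order. -/
def specLE (cs : CoxeterSystem M W) (J : Set W) (δ : W → W) (w w' : W) : Prop :=
  ∃ u ∈ Subgroup.closure J, bruhatLE cs (u⁻¹ * w * δ u) w'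

section
open List
section GroupAux

variable {G : Type*} [Group G]

theorem conj_eq_iff (q t x : G) : q * t * q⁻¹ = x ↔ t = q⁻¹ * x * q := by
  constructor
  · intro h; rw [← h]; group
  · intro h; rw [h]; group

theorem invol_mul_pow {a b : G} (ha : a * a = 1) (hb : b * b = 1) (m : ℕ) :
    b * (a * b) ^ m = ((a * b)⁻¹) ^ m * b := by
  have hbinv : b⁻¹ = b := by
    rw [← mul_one b⁻¹, ← hb, ← mul_assoc, inv_mul_cancel, one_mul]
  have hainv : a⁻¹ = a := by
    rw [← mul_one a⁻¹, ← ha, ← mul_assoc, inv_mul_cancel, one_mul]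
  induction m with
  | zero => simp
  | succ n ih =>
      have h2 : b * (a * b) = (a * b)⁻¹ * b := by
        rw [mul_inv_rev, hbinv, hainv]; group
      rw [pow_succ, ← mul_assoc, ih, mul_assoc, h2, ← mul_assoc, ← pow_succ]

end GroupAux

namespace SpecAux

variable (cs : CoxeterSystem M W)

local prefix:100 "s" => cs.simple
local prefix:100 "π" => cs.wordProd
local prefix:100 "ℓ" => cs.length
local prefix:100 "ris" => cs.rightInvSeq

section Perm

variable [DecidableEq W]

/-- The function underlying the reflection-parity permutation. -/
def eFun (i : B) : W × ZMod 2 → W × ZMod 2 :=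
  fun p => (s i * p.1 * s i, p.2 + if p.1 = s i then 1 else 0)

theorem eFun_involutive (i : B) : Function.Involutive (eFun cs i) := by
  intro p
  simp only [eFun]
  have h1 : s i * (s i * p.1 * s i) * s i = p.1 := by
    rw [← mul_assoc, ← mul_assoc, cs.simple_mul_simple_self, one_mul, mul_assoc,
      cs.simple_mul_simple_self, mul_one]
  rw [h1]
  have h2 : (s i * p.1 * s i = s i) ↔ (p.1 = s i) := by
    rw [show s i * p.1 * s i = s i * p.1 * (s i)⁻¹ by rw [cs.inv_simple], conj_eq_iff]
    rw [cs.inv_simple, cs.simple_mul_simple_self, one_mul]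
  ext
  · rfl
  · simp only [h2]
    rcases eq_or_ne p.1 (s i) with h | h <;> simp [h]
    rw [add_assoc, CharTwo.add_self_eq_zero, add_zero]

/-- The reflection-parity permutation attached to a simple generator. -/
def ePerm (i : B) : Equiv.Perm (W × ZMod 2) := (eFun_involutive cs i).toPerm

@[simp] theorem ePerm_apply (i : B) (p : W × ZMod 2) :
    ePerm cs i p = (s i * p.1 * s i, p.2 + if p.1 = s i then 1 else 0) := rfl

theorem ePerm_mul_pow_apply (i j : B) (k : ℕ) :
    ∀ t : W, ∀ ε : ZMod 2,
    ((ePerm cs i * ePerm cs j) ^ k) (t, ε) =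
      ((s i * s j) ^ k * t * ((s i * s j) ^ k)⁻¹,
        ε + ∑ r ∈ Finset.range (2 * k),
          if t = ((s i * s j)⁻¹) ^ r * s j then 1 else 0) := by
  have hp : ∀ m : ℕ, s j * (s i * s j) ^ m = ((s i * s j)⁻¹) ^ m * s j :=
    invol_mul_pow (cs.simple_mul_simple_self i) (cs.simple_mul_simple_self j)
  induction k with
  | zero => intro t ε; simp
  | succ n ih =>
      intro t ε
      set p := s i * s j with hpdef
      rw [pow_succ', Equiv.Perm.mul_apply, ih t ε, Equiv.Perm.mul_apply]
      simp only [ePerm_apply]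
      have conj2 : ∀ X : W, s i * (s j * X * s j) * s i = p * X * p⁻¹ := by
        intro X
        rw [hpdef, mul_inv_rev, cs.inv_simple, cs.inv_simple]
        group
      have e1 : (p ^ n * t * (p ^ n)⁻¹ = s j) ↔ (t = (p⁻¹) ^ (2 * n) * s j) := by
        rw [conj_eq_iff]
        have : (p ^ n)⁻¹ * s j * p ^ n = (p⁻¹) ^ (2 * n) * s j := by
          rw [mul_assoc, hp n, ← mul_assoc]
          group
        rw [this]
      have e2 : (s j * (p ^ n * t * (p ^ n)⁻¹) * s j = s i) ↔
          (t = (p⁻¹) ^ (2 * n + 1) * s j) := by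
        rw [show s j * (p ^ n * t * (p ^ n)⁻¹) * s j
          = s j * (p ^ n * t * (p ^ n)⁻¹) * (s j)⁻¹ by rw [cs.inv_simple], conj_eq_iff,
          conj_eq_iff]
        have : (p ^ n)⁻¹ * ((s j)⁻¹ * s i * s j) * p ^ n = (p⁻¹) ^ (2 * n + 1) * s j := by
          rw [cs.inv_simple]
          calc (p ^ n)⁻¹ * (s j * s i * s j) * p ^ n
              = (p ^ n)⁻¹ * ((s j * s i) * (s j * p ^ n)) := by group
            _ = (p ^ n)⁻¹ * ((s j * s i) * ((p⁻¹) ^ n * s j)) := by rw [hp n]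
            _ = (p ^ n)⁻¹ * (p⁻¹ * ((p⁻¹) ^ n * s j)) := by
                  rw [hpdef, mul_inv_rev, cs.inv_simple, cs.inv_simple]
            _ = (p⁻¹) ^ (2 * n + 1) * s j := by group
        rw [this]
      rw [Prod.mk.injEq]
      constructor
      · rw [conj2, pow_succ']
        group
      · simp only [e1, e2]
        rw [show 2 * (n + 1) = 2 * n + 1 + 1 by omega, Finset.sum_range_succ,
          Finset.sum_range_succ]
        ring

theorem isLiftable : M.IsLiftable (ePerm cs) := by
  intro i j
  ext ⟨t, ε⟩
  · rw [ePerm_mul_pow_apply]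
    simp [cs.simple_mul_simple_pow i j]
  · rw [ePerm_mul_pow_apply]
    simp only [Equiv.Perm.one_apply]
    rw [two_mul, Finset.sum_range_add]
    have : ∀ r ∈ Finset.range (M i j),
        (if t = ((s i * s j)⁻¹) ^ (M i j + r) * s j then (1 : ZMod 2) else 0)
        = (if t = ((s i * s j)⁻¹) ^ r * s j then (1:ZMod 2) else 0) := by
      intro r _
      have : ((s i * s j)⁻¹) ^ (M i j + r) = ((s i * s j)⁻¹) ^ r := by
        rw [pow_add, inv_pow, cs.simple_mul_simple_pow i j, inv_one, one_mul]
      rw [this]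
    rw [Finset.sum_congr rfl this, CharTwo.add_self_eq_zero, add_zero]

/-- The reflection-parity representation. -/
def phi : W →* Equiv.Perm (W × ZMod 2) := cs.lift ⟨ePerm cs, isLiftable cs⟩

theorem phi_simple (i : B) : phi cs (s i) = ePerm cs i :=
  cs.lift_apply_simple (isLiftable cs) i

theorem phi_wordProd (ω : List B) (t : W) (ε : ZMod 2) :
    phi cs (π ω) (t, ε) =
      (π ω * t * (π ω)⁻¹, ε + ((ris ω).count t : ZMod 2)) := by
  induction ω generalizing ε with
  | nil => simp
  | cons i ω ih =>
      rw [cs.wordProd_cons, map_mul, Equiv.Perm.mul_apply, ih ε, phi_simple, ePerm_apply]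
      have hris : ris (i :: ω) = ((π ω)⁻¹ * s i * π ω) :: ris ω := rfl
      rw [hris, List.count_cons, Prod.mk.injEq]
      constructor
      · rw [mul_inv_rev, cs.inv_simple]
        group
      · have hcond : (π ω * t * (π ω)⁻¹ = s i) ↔ (((π ω)⁻¹ * s i * π ω == t) = true) := by
          rw [beq_iff_eq, conj_eq_iff, eq_comm]
        simp only [hcond]
        push_cast
        rcases eq_or_ne ((π ω)⁻¹ * s i * π ω) t with h | h <;> simp [h] <;> ring

/-- The parity of the number of times `t` occurs in an inversion sequence of `w`. -/
def nu (w t : W) : ZMod 2 := ((phi cs w) (t, 0)).2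

theorem nu_count (ω : List B) (t : W) : nu cs (π ω) t = ((ris ω).count t : ZMod 2) := by
  rw [nu, phi_wordProd]; simp

theorem phi_apply (w t : W) (ε : ZMod 2) :
    phi cs w (t, ε) = (w * t * w⁻¹, ε + nu cs w t) := by
  obtain ⟨ω, -, rfl⟩ := cs.exists_reduced_word w
  rw [phi_wordProd, nu_count]

theorem nu_self {t : W} (ht : cs.IsReflection t) : nu cs t t = 1 := by
  obtain ⟨v, i, rfl⟩ := ht
  set t := v * s i * v⁻¹ with hter
  have hphit : phi cs t = phi cs v * phi cs (s i) * phi cs v⁻¹ := by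
    rw [hter, map_mul, map_mul]
  set a := nu cs v⁻¹ t with ha
  set b := nu cs v (s i) with hb
  have step1 : phi cs v⁻¹ (t, 0) = (s i, 0 + a) := by
    rw [phi_apply, ← ha]
    congr 1
    rw [hter]; group
  have hab : a + b = 0 := by
    have h0 : phi cs (v * v⁻¹) (t, 0) = (t, 0) := by simp
    rw [map_mul, Equiv.Perm.mul_apply, step1, phi_apply, ← hb] at h0
    have h1 := congrArg Prod.snd h0
    simp only [zero_add] at h1
    exact h1
  have step2 : phi cs (s i) (s i, 0 + a) = (s i, a + 1) := by
    simp [phi_simple, cs.simple_mul_simple_self, add_assoc]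
  have hfin : phi cs t (t, 0) = (t, a + 1 + b) := by
    rw [hphit, Equiv.Perm.mul_apply, Equiv.Perm.mul_apply, step1, step2, phi_apply, ← hb]
  rw [nu, hfin, show a + 1 + b = a + b + 1 by ring, hab, zero_add]

theorem nu_mul_reflection {w t : W} (ht : cs.IsReflection t) :
    nu cs (w * t) t = nu cs w t + 1 := by
  have h2 : phi cs t (t, 0) = (t, 1) := by
    rw [phi_apply, nu_self cs ht, zero_add]
    congr 1
    rw [ht.mul_self, one_mul, ht.inv]
  have hL : phi cs (w * t) (t, 0) = (w * t * t * (w*t)⁻¹, 0 + nu cs (w*t) t) := by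
    rw [phi_apply]
  have hR : phi cs (w * t) (t, 0) = (w * t * w⁻¹, 1 + nu cs w t) := by
    rw [map_mul, Equiv.Perm.mul_apply, h2, phi_apply]
  rw [hL] at hR
  have := congrArg Prod.snd hR
  simp only [zero_add] at this
  rw [this]; ring

theorem nu_eq_one_of_isRightInversion {w t : W} (h : cs.IsRightInversion w t) :
    nu cs w t = 1 := by
  by_contra hne
  have h0 : nu cs w t = 0 := by
    have : ∀ x : ZMod 2, x ≠ 1 → x = 0 := by decide
    exact this _ hne
  have h1 : nu cs (w * t) t = 1 := by rw [nu_mul_reflection cs h.1, h0, zero_add]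
  obtain ⟨ω, hlen, hw⟩ := cs.exists_reduced_word (w * t)
  have hred : cs.IsReduced ω := hlen
  have hcount : ((ris ω).count t : ZMod 2) = 1 := by rw [← nu_count, ← hw, h1]
  have hmem : t ∈ ris ω := by
    by_contra hmem
    rw [List.count_eq_zero_of_not_mem hmem] at hcount
    simp at hcount
  have hinv := cs.isRightInversion_of_mem_rightInvSeq hred hmem
  rw [← hw] at hinv
  have heq : w * t * t = w := by rw [mul_assoc, h.1.mul_self, mul_one]
  have hlt : cs.length (w * t * t) < cs.length (w * t) := hinv.2
  rw [heq] at hlt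
  exact Nat.lt_asymm h.2 hlt

end Perm

theorem mem_rightInvSeq_of_isRightInversion {ω : List B} (hω : cs.IsReduced ω) {t : W}
    (ht : cs.IsRightInversion (π ω) t) : t ∈ ris ω := by
  classical
  have h1 : nu cs (π ω) t = 1 := nu_eq_one_of_isRightInversion cs ht
  rw [nu_count] at h1
  by_contra hmem
  rw [List.count_eq_zero_of_not_mem hmem] at h1
  simp at h1


theorem exists_eraseIdx_of_isRightInversion {ω : List B} (hω : cs.IsReduced ω) {t : W}
    (ht : cs.IsRightInversion (π ω) t) : ∃ j < ω.length, π ω * t = π (ω.eraseIdx j) := by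
  have hmem := mem_rightInvSeq_of_isRightInversion cs hω ht
  obtain ⟨j, hj, hget⟩ := List.mem_iff_getElem.mp hmem
  rw [cs.length_rightInvSeq] at hj
  refine ⟨j, hj, ?_⟩
  have : t = (ris ω).getD j 1 := by
    rw [List.getD_eq_getElem _ 1 (by rwa [cs.length_rightInvSeq])]
    exact hget.symm
  rw [this, cs.wordProd_mul_getD_rightInvSeq]

theorem exists_eraseIdx_of_isLeftInversion {ω : List B} (hω : cs.IsReduced ω) {t : W}
    (ht : cs.IsLeftInversion (π ω) t) : ∃ j < ω.length, t * π ω = π (ω.eraseIdx j) := by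
  have h1 : cs.IsRightInversion (π (ω.reverse)) t := by
    rw [cs.wordProd_reverse]
    exact cs.isRightInversion_inv_iff.mpr ht
  have hmem : t ∈ cs.leftInvSeq ω := by
    have := mem_rightInvSeq_of_isRightInversion cs ((cs.isReduced_reverse_iff ω).mpr hω) h1
    rw [cs.rightInvSeq_reverse, List.mem_reverse] at this
    exact this
  obtain ⟨j, hj, hget⟩ := List.mem_iff_getElem.mp hmem
  rw [cs.length_leftInvSeq] at hj
  refine ⟨j, hj, ?_⟩
  have : t = (cs.leftInvSeq ω).getD j 1 := by
    rw [List.getD_eq_getElem _ 1 (by rwa [cs.length_leftInvSeq])]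
    exact hget.symm
  rw [this, cs.getD_leftInvSeq_mul_wordProd]

theorem exists_sublist_of_not_isReduced (ω : List B) :
    ¬cs.IsReduced ω → ∃ ω', ω'.Sublist ω ∧ ω'.length + 2 = ω.length ∧ π ω' = π ω := by
  induction ω using List.reverseRecOn with
  | nil =>
      intro h
      exact absurd (by simp [CoxeterSystem.IsReduced]) h
  | append_singleton ω₀ i ih =>
      intro h
      by_cases hred₀ : cs.IsReduced ω₀
      · have hprod : π (ω₀ ++ [i]) = π ω₀ * s i := by
          rw [cs.wordProd_append, cs.wordProd_singleton]
        have hlen : cs.length (π ω₀ * s i) ≠ ω₀.length + 1 := by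
          intro hc
          apply h
          rw [CoxeterSystem.IsReduced, hprod, hc, List.length_append, List.length_singleton]
        have hlred : cs.length (π ω₀) = ω₀.length := hred₀
        have hinv : cs.IsRightInversion (π ω₀) (s i) := by
          refine ⟨cs.isReflection_simple i, ?_⟩
          rcases cs.length_mul_simple (π ω₀) i with hc | hc
          · omega
          · omega
        obtain ⟨j, hj, heq⟩ := exists_eraseIdx_of_isRightInversion cs hred₀ hinv
        refine ⟨ω₀.eraseIdx j, ?_, ?_, ?_⟩
        · exact (List.eraseIdx_sublist ω₀ j).trans (List.sublist_append_left ω₀ [i])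
        · rw [List.length_eraseIdx, if_pos hj, List.length_append, List.length_singleton]
          omega
        · rw [← heq, hprod]
      · obtain ⟨ω', hsub, hlen, hprod⟩ := ih hred₀
        refine ⟨ω' ++ [i], hsub.append_right [i], ?_, ?_⟩
        · simp only [List.length_append, List.length_singleton]; omega
        · rw [cs.wordProd_append, cs.wordProd_append, hprod]

theorem exists_reduced_sublist (ω : List B) :
    ∃ ω', ω'.Sublist ω ∧ cs.IsReduced ω' ∧ π ω' = π ω := by
  have H : ∀ n (ω : List B), ω.length = n →
      ∃ ω', ω'.Sublist ω ∧ cs.IsReduced ω' ∧ π ω' = π ω := by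
    intro n
    induction n using Nat.strong_induction_on with
    | _ n ihn =>
        intro ω hn
        by_cases hred : cs.IsReduced ω
        · exact ⟨ω, List.Sublist.refl ω, hred, rfl⟩
        · obtain ⟨ω'', hsub, hlen, hprod⟩ := exists_sublist_of_not_isReduced cs ω hred
          obtain ⟨ω', h1, h2, h3⟩ := ihn ω''.length (by omega) ω'' rfl
          exact ⟨ω', h1.trans hsub, h2, h3.trans hprod⟩
  exact H ω.length ω rfl

section Parabolic

variable {J : Set W}

theorem jword_mem_closure {l : List B} (hl : ∀ i ∈ l, cs.simple i ∈ J) :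
    π l ∈ Subgroup.closure J := by
  rw [CoxeterSystem.wordProd]
  refine Subgroup.list_prod_mem _ ?_
  intro x hx
  obtain ⟨i, hi, rfl⟩ := List.mem_map.mp hx
  exact Subgroup.subset_closure (hl i hi)

theorem exists_jword (hJ : J ⊆ Set.range cs.simple) {u : W} (hu : u ∈ Subgroup.closure J) :
    ∃ l : List B, (∀ i ∈ l, cs.simple i ∈ J) ∧ π l = u := by
  induction hu using Subgroup.closure_induction with
  | mem x hx =>
      obtain ⟨i, rfl⟩ := hJ hx
      exact ⟨[i], by simpa using hx, cs.wordProd_singleton i⟩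
  | one => exact ⟨[], by simp, cs.wordProd_nil⟩
  | mul x y hx hy ihx ihy =>
      obtain ⟨lx, hlx, hlxp⟩ := ihx
      obtain ⟨ly, hly, hlyp⟩ := ihy
      refine ⟨lx ++ ly, ?_, ?_⟩
      · intro i hi
        rcases List.mem_append.mp hi with h | h
        · exact hlx i h
        · exact hly i h
      · rw [cs.wordProd_append, hlxp, hlyp]
  | inv x hx ihx =>
      obtain ⟨lx, hlx, hlxp⟩ := ihx
      refine ⟨lx.reverse, ?_, ?_⟩
      · intro i hi; exact hlx i (List.mem_reverse.mp hi)
      · rw [cs.wordProd_reverse, hlxp]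

theorem exists_reduced_jword (hJ : J ⊆ Set.range cs.simple) {u : W}
    (hu : u ∈ Subgroup.closure J) :
    ∃ l : List B, (∀ i ∈ l, cs.simple i ∈ J) ∧ cs.IsReduced l ∧ π l = u := by
  obtain ⟨l, hl, hlp⟩ := exists_jword cs hJ hu
  obtain ⟨l', hsub, hred, hprod⟩ := exists_reduced_sublist cs l
  exact ⟨l', fun i hi => hl i (hsub.subset hi), hred, hprod.trans hlp⟩

theorem length_mul_of_min (hJ : J ⊆ Set.range cs.simple) (w : W)
    (hmin : ∀ x : W, (∃ v ∈ Subgroup.closure J, x = v * w) → ℓ w ≤ ℓ x) :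
    ∀ u ∈ Subgroup.closure J, ℓ (u * w) = ℓ u + ℓ w := by
  have H : ∀ n (u : W), u ∈ Subgroup.closure J → ℓ u = n → ℓ (u * w) = ℓ u + ℓ w := by
    intro n
    induction n using Nat.strong_induction_on with
    | _ n ihn =>
        intro u hu hn
        obtain ⟨l, hlJ, hlred, hlprod⟩ := exists_reduced_jword cs hJ hu
        have hlu : ℓ u = l.length := by rw [← hlprod]; exact hlred
        cases l with
        | nil =>
            have h1 : u = 1 := by rw [← hlprod, cs.wordProd_nil]
            subst h1
            simp
        | cons j l' =>
            set u' := π l' with hu'def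
            have hjl' : ∀ i ∈ l', cs.simple i ∈ J := fun i hi => hlJ i (List.mem_cons_of_mem j hi)
            have hu' : u' ∈ Subgroup.closure J := jword_mem_closure cs hjl'
            have hl'red : cs.IsReduced l' := by
              have := hlred.drop 1
              simpa using this
            have hlu' : ℓ u' = l'.length := hl'red
            have husj : u = s j * u' := by rw [← hlprod, cs.wordProd_cons]
            have hulen : ℓ u = l'.length + 1 := by simpa using hlu
            have ihu' : ℓ (u' * w) = ℓ u' + ℓ w := by
              subst hn
              exact ihn l'.length (by omega) u' hu' hlu'
            obtain ⟨ω, hωlen, hωw⟩ := cs.exists_reduced_word w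
            have hαprod : π (l' ++ ω) = u' * w := by
              rw [cs.wordProd_append, ← hu'def, ← hωw]
            have hαred : cs.IsReduced (l' ++ ω) := by
              rw [CoxeterSystem.IsReduced, hαprod, ihu', List.length_append, hlu', hωw, hωlen.eq]
            rcases cs.length_simple_mul (u' * w) j with hup | hdown
            · have h2 : u * w = s j * (u' * w) := by rw [husj, mul_assoc]
              rw [h2, hup, ihu', hulen, hlu']
              omega
            · exfalso
              have hLinv : cs.IsLeftInversion (π (l' ++ ω)) (s j) := by
                refine ⟨cs.isReflection_simple j, ?_⟩
                rw [hαprod]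
                omega
              obtain ⟨k, hk, heq⟩ := exists_eraseIdx_of_isLeftInversion cs hαred hLinv
              rw [hαprod] at heq
              rw [List.length_append] at hk
              rcases lt_or_ge k l'.length with hkl | hkl
              · rw [List.eraseIdx_append_of_lt_length hkl, cs.wordProd_append] at heq
                have hueq : u = π (l'.eraseIdx k) := by
                  have h3 : u * w = π (l'.eraseIdx k) * w := by
                    rw [husj, mul_assoc, heq, hωw]
                  exact mul_right_cancel h3
                have h4 : ℓ u ≤ (l'.eraseIdx k).length := hueq ▸ cs.length_wordProd_le _
                rw [List.length_eraseIdx, if_pos hkl] at h4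
                omega
              · rw [List.eraseIdx_append_of_length_le hkl, cs.wordProd_append] at heq
                set m := k - l'.length with hm
                have hmlt : m < ω.length := by omega
                have hβ : π (ω.eraseIdx m) = (u'⁻¹ * u) * w := by
                  have h2 : u' * π (ω.eraseIdx m) = (s j * u') * w := by
                    rw [← hu'def] at heq
                    rw [← heq, mul_assoc]
                  calc π (ω.eraseIdx m) = u'⁻¹ * (u' * π (ω.eraseIdx m)) := by group
                    _ = u'⁻¹ * ((s j * u') * w) := by rw [h2]
                    _ = (u'⁻¹ * u) * w := by rw [← husj, mul_assoc]
                have h5 : ℓ w ≤ ℓ (π (ω.eraseIdx m)) :=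
                  hmin _ ⟨u'⁻¹ * u, mul_mem (inv_mem hu') hu, hβ⟩
                have h6 : ℓ (π (ω.eraseIdx m)) ≤ (ω.eraseIdx m).length :=
                  cs.length_wordProd_le _
                rw [List.length_eraseIdx, if_pos hmlt] at h6
                have hωl : ℓ w = ω.length := by rw [hωw]; exact hωlen.eq
                omega
  intro u hu
  exact H (ℓ u) u hu rfl

theorem length_mul_of_minLeft (hJ : J ⊆ Set.range cs.simple) (w : W)
    (hw : ∀ t ∈ J, ℓ w < ℓ (t * w)) :
    ∀ u ∈ Subgroup.closure J, ℓ (u * w) = ℓ u + ℓ w := by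
  set C : Set ℕ := {n | ∃ v ∈ Subgroup.closure J, ℓ (v * w) = n} with hC
  have hne : C.Nonempty := ⟨ℓ w, 1, one_mem _, by rw [one_mul]⟩
  obtain ⟨v₀, hv₀, hv₀len⟩ := Nat.sInf_mem hne
  set wt := v₀ * w with hwt
  have hwtmin : ∀ x : W, (∃ v ∈ Subgroup.closure J, x = v * wt) → ℓ wt ≤ ℓ x := by
    rintro x ⟨v, hv, rfl⟩
    have h1 : v * wt = (v * v₀) * w := by rw [hwt, mul_assoc]
    have h2 : ℓ ((v * v₀) * w) ∈ C := ⟨v * v₀, mul_mem hv hv₀, rfl⟩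
    calc ℓ wt = sInf C := hv₀len
      _ ≤ ℓ ((v * v₀) * w) := Nat.sInf_le h2
      _ = ℓ (v * wt) := by rw [h1]
  have hkey := length_mul_of_min cs hJ wt hwtmin
  have hwrt : w = v₀⁻¹ * wt := by rw [hwt]; group
  obtain ⟨l, hlJ, hlred, hlprod⟩ := exists_reduced_jword cs hJ (inv_mem hv₀ : v₀⁻¹ ∈ _)
  cases l with
  | nil =>
      have h1 : v₀⁻¹ = 1 := by rw [← hlprod, cs.wordProd_nil]
      have h2 : w = wt := by rw [hwrt, h1, one_mul]
      rw [← h2] at hkey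
      exact hkey
  | cons j l' =>
      exfalso
      set u' := π l' with hu'def
      have hjl' : ∀ i ∈ l', cs.simple i ∈ J := fun i hi => hlJ i (List.mem_cons_of_mem j hi)
      have hu' : u' ∈ Subgroup.closure J := jword_mem_closure cs hjl'
      have hl'red : cs.IsReduced l' := by
        have := hlred.drop 1
        simpa using this
      have hlu' : ℓ u' = l'.length := hl'red
      have husj : v₀⁻¹ = s j * u' := by rw [← hlprod, cs.wordProd_cons]
      have hlv : ℓ v₀⁻¹ = l'.length + 1 := by
        have : ℓ v₀⁻¹ = (j :: l').length := by rw [← hlprod]; exact hlred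
        simpa using this
      have hsjw : s j * w = u' * wt := by
        rw [hwrt, husj, mul_assoc, cs.simple_mul_simple_cancel_left]
      have h3 : ℓ (s j * w) = l'.length + ℓ wt := by
        rw [hsjw, hkey u' hu', hlu']
      have h4 : ℓ w = (l'.length + 1) + ℓ wt := by
        rw [hwrt, hkey v₀⁻¹ (inv_mem hv₀), hlv]
      have h5 := hw (s j) (hlJ j List.mem_cons_self)
      omega

theorem delta_one {δ : W → W}
    (hmap : ∀ u ∈ Subgroup.closure J, ∀ v ∈ Subgroup.closure J, δ (u * v) = δ u * δ v) :
    δ 1 = 1 := by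
  have h1 : δ (1 * 1) = δ 1 * δ 1 := hmap 1 (one_mem _) 1 (one_mem _)
  rw [one_mul] at h1
  have h2 : δ 1 * 1 = δ 1 * δ 1 := by rw [mul_one]; exact h1
  exact (mul_left_cancel h2).symm

theorem delta_word {K : Set W} (hK : K ⊆ Set.range cs.simple) {δ : W → W}
    (hmap : ∀ u ∈ Subgroup.closure J, ∀ v ∈ Subgroup.closure J, δ (u * v) = δ u * δ v)
    (himg : δ '' J = K) :
    ∀ l : List B, (∀ i ∈ l, cs.simple i ∈ J) →
      ∃ m : List B, m.length = l.length ∧ π m = δ (π l) := by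
  intro l
  induction l with
  | nil =>
      intro _
      refine ⟨[], rfl, ?_⟩
      rw [cs.wordProd_nil, delta_one hmap]
  | cons i l' ih =>
      intro hl
      obtain ⟨m', hm'len, hm'prod⟩ := ih (fun i' hi' => hl i' (List.mem_cons_of_mem i hi'))
      have hsi : cs.simple i ∈ J := hl i List.mem_cons_self
      have hdsi : δ (cs.simple i) ∈ K := himg ▸ Set.mem_image_of_mem δ hsi
      obtain ⟨b, hb⟩ := hK hdsi
      refine ⟨b :: m', by simp [hm'len], ?_⟩
      rw [cs.wordProd_cons, cs.wordProd_cons, hm'prod, hb]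
      rw [hmap (cs.simple i) (Subgroup.subset_closure hsi) (π l')
        (jword_mem_closure cs (fun i' hi' => hl i' (List.mem_cons_of_mem i hi')))]

theorem delta_length_le (hJ : J ⊆ Set.range cs.simple) {K : Set W}
    (hK : K ⊆ Set.range cs.simple) {δ : W → W}
    (hmap : ∀ u ∈ Subgroup.closure J, ∀ v ∈ Subgroup.closure J, δ (u * v) = δ u * δ v)
    (himg : δ '' J = K) {u : W} (hu : u ∈ Subgroup.closure J) :
    ℓ (δ u) ≤ ℓ u := by
  obtain ⟨l, hlJ, hlred, hlprod⟩ := exists_reduced_jword cs hJ hu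
  obtain ⟨m, hmlen, hmprod⟩ := delta_word cs hK hmap himg l hlJ
  have h1 : ℓ (δ u) ≤ m.length := by
    rw [← hlprod, ← hmprod]
    exact cs.length_wordProd_le m
  have h2 : ℓ u = l.length := by rw [← hlprod]; exact hlred
  omega

end Parabolic

end SpecAux

end

theorem SpecAux.bruhatLE_length_le (cs : CoxeterSystem M W) {u v : W} (h : bruhatLE cs u v) :
    cs.length u ≤ cs.length v := by
  induction h with
  | refl => exact le_refl _
  | tail hab hbc ih =>
      obtain ⟨t, -, rfl, hlt⟩ := hbc
      omega

/-- If `w ∈ ᴶW` and `w ⪯ w'`, then `ℓ(w) ≤ ℓ(w')`. -/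
theorem length_le_of_specLE (cs : CoxeterSystem M W) (J K : Set W)
    (hJ : J ⊆ Set.range cs.simple) (hK : K ⊆ Set.range cs.simple)
    (δ : W → W) (hδ : IsParabolicIso J K δ)
    (w w' : W) (hw : w ∈ minLeft cs J) (h : specLE cs J δ w w') :
    cs.length w ≤ cs.length w' := by
  classical
  obtain ⟨u, hu, hb⟩ := h
  have h1 : cs.length (u⁻¹ * w * δ u) ≤ cs.length w' := SpecAux.bruhatLE_length_le cs hb
  have h2 : cs.length (u⁻¹ * w) = cs.length u⁻¹ + cs.length w :=
    SpecAux.length_mul_of_minLeft cs hJ w hw u⁻¹ (inv_mem hu)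
  have h3 : cs.length (δ u) ≤ cs.length u :=
    SpecAux.delta_length_le cs hJ hK hδ.map_mul hδ.image_eq hu
  have h4 : cs.length (u⁻¹ * w) - cs.length (δ u) ≤ cs.length (u⁻¹ * w * δ u) :=
    cs.length_mul_ge_length_sub_length (u⁻¹ * w) (δ u)
  have h5 : cs.length u⁻¹ = cs.length u := cs.length_inv u
  omega
end

section
/- Let (W, S) be a Coxeter system and let x, w ∈ W. Then the set {y ∈ W : w·y ≤ x} contains a smallest element y_min and a largest element y_max with respect to the Bruhat order; moreover ℓ(y_min) = ℓ(w) − ℓ(w·y_min) and ℓ(y_max) = ℓ(w) + ℓ(w·y_max). -/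
open CoxeterSystem

variable {B W : Type*} [Group W] {M : CoxeterMatrix B}

open scoped Classical

namespace BruhatAux

/-! ### The sign representation on `W × ℤˣ` and the strong exchange property -/

variable (cs : CoxeterSystem M W)

/-- The basic involution attached to a simple reflection. -/
noncomputable def sgn (i : B) : W × ℤˣ → W × ℤˣ :=
  fun p => (cs.simple i * p.1 * cs.simple i, if p.1 = cs.simple i then -p.2 else p.2)

lemma sgn_involutive (i : B) : Function.Involutive (sgn cs i) := by
  rintro ⟨w, ε⟩
  by_cases h : w = cs.simple i
  · subst h
    simp [sgn, cs.simple_mul_simple_self]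
  · have h2 : cs.simple i * w * cs.simple i ≠ cs.simple i := by
      intro hc
      apply h
      have := congrArg (fun z => cs.simple i * z * cs.simple i) hc
      simpa [mul_assoc, cs.simple_mul_simple_cancel_left, cs.simple_mul_simple_self] using this
    simp only [sgn, if_neg h, if_neg h2]
    ext
    · simp [mul_assoc, cs.simple_mul_simple_cancel_left, cs.simple_mul_simple_cancel_right]
    · rfl

/-- The basic involution as a permutation. -/
noncomputable def sperm (i : B) : Equiv.Perm (W × ℤˣ) :=
  (sgn_involutive cs i).toPerm _

lemma sperm_apply (i : B) (w : W) (ε : ℤˣ) :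
    sperm cs i (w, ε) = (cs.simple i * w * cs.simple i, if w = cs.simple i then -ε else ε) := rfl

lemma conj_q_pow (i j : B) (k : ℕ) :
    cs.simple j * ((cs.simple j * cs.simple i) ^ k)⁻¹ * cs.simple j
      = (cs.simple j * cs.simple i) ^ k := by
  have h1 : cs.simple j * (cs.simple j * cs.simple i)⁻¹ * (cs.simple j)⁻¹
      = cs.simple j * cs.simple i := by
    simp only [mul_inv_rev, cs.inv_simple]
    simp [mul_assoc, cs.simple_mul_simple_self]
  calc cs.simple j * ((cs.simple j * cs.simple i) ^ k)⁻¹ * cs.simple j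
      = cs.simple j * ((cs.simple j * cs.simple i)⁻¹) ^ k * (cs.simple j)⁻¹ := by
        rw [inv_pow, cs.inv_simple]
    _ = (cs.simple j * (cs.simple j * cs.simple i)⁻¹ * (cs.simple j)⁻¹) ^ k := by
        rw [conj_pow]
    _ = (cs.simple j * cs.simple i) ^ k := by rw [h1]

lemma conj_helper₀ (i j : B) (k : ℕ) :
    (cs.simple j * cs.simple i) ^ k * cs.simple j * ((cs.simple j * cs.simple i) ^ k)⁻¹
      = (cs.simple j * cs.simple i) ^ (2 * k) * cs.simple j := by
  calc (cs.simple j * cs.simple i) ^ k * cs.simple j * ((cs.simple j * cs.simple i) ^ k)⁻¹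
      = (cs.simple j * cs.simple i) ^ k
          * (cs.simple j * ((cs.simple j * cs.simple i) ^ k)⁻¹ * cs.simple j) * cs.simple j := by
        simp [mul_assoc, cs.simple_mul_simple_self]
    _ = (cs.simple j * cs.simple i) ^ k * (cs.simple j * cs.simple i) ^ k * cs.simple j := by
        rw [conj_q_pow]
    _ = _ := by rw [two_mul, pow_add]

lemma conj_helper₁ (i j : B) (k : ℕ) :
    (cs.simple j * cs.simple i) ^ k * (cs.simple j * cs.simple i * cs.simple j)
        * ((cs.simple j * cs.simple i) ^ k)⁻¹
      = (cs.simple j * cs.simple i) ^ (2 * k + 1) * cs.simple j := by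
  calc (cs.simple j * cs.simple i) ^ k * (cs.simple j * cs.simple i * cs.simple j)
        * ((cs.simple j * cs.simple i) ^ k)⁻¹
      = (cs.simple j * cs.simple i) ^ (k + 1)
          * (cs.simple j * ((cs.simple j * cs.simple i) ^ k)⁻¹ * cs.simple j) * cs.simple j := by
        rw [pow_succ]
        simp [mul_assoc, cs.simple_mul_simple_self]
    _ = (cs.simple j * cs.simple i) ^ (k + 1) * (cs.simple j * cs.simple i) ^ k * cs.simple j := by
        rw [conj_q_pow]
    _ = _ := by
        rw [← pow_add]
        congr 2
        omega

lemma conj_eq_iff (g u v : W) : g * u * g⁻¹ = v ↔ u = g⁻¹ * v * (g⁻¹)⁻¹ := by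
  constructor
  · intro h; rw [← h]; group
  · intro h; rw [h]; group

lemma simple_conj_eq_iff (j : B) (u v : W) :
    cs.simple j * u * cs.simple j = v ↔ u = cs.simple j * v * cs.simple j := by
  constructor
  · intro h
    rw [← h]
    simp [mul_assoc, cs.simple_mul_simple_cancel_left, cs.simple_mul_simple_self]
  · intro h
    rw [h]
    simp [mul_assoc, cs.simple_mul_simple_cancel_left, cs.simple_mul_simple_self]

lemma sign_ite2 (C1 C2 : Prop) [Decidable C1] [Decidable C2] (σ : ℤˣ) :
    (if C2 then -(if C1 then -σ else σ) else (if C1 then -σ else σ))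
      = σ * ((if C1 then (-1 : ℤˣ) else 1) * (if C2 then (-1 : ℤˣ) else 1)) := by
  split_ifs <;> simp

/-- The explicit formula for powers of `sperm i * sperm j`. -/
lemma sperm_mul_pow (i j : B) (k : ℕ) (w : W) (ε : ℤˣ) :
    ((sperm cs i * sperm cs j) ^ k) (w, ε) =
      ((cs.simple i * cs.simple j) ^ k * w * (((cs.simple i * cs.simple j) ^ k)⁻¹),
        ε * ∏ n ∈ Finset.range (2 * k),
          (if w = (cs.simple j * cs.simple i) ^ n * cs.simple j then (-1 : ℤˣ) else 1)) := by
  have hpq : ∀ m : ℕ, (((cs.simple i * cs.simple j) ^ m)⁻¹ : W)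
      = (cs.simple j * cs.simple i) ^ m := by
    intro m
    rw [← inv_pow, mul_inv_rev, cs.inv_simple, cs.inv_simple]
  induction k with
  | zero => simp
  | succ k ih =>
    rw [pow_succ', Equiv.Perm.mul_apply, ih, Equiv.Perm.mul_apply, sperm_apply, sperm_apply]
    have c1 : ((cs.simple i * cs.simple j) ^ k * w * ((cs.simple i * cs.simple j) ^ k)⁻¹
        = cs.simple j)
        ↔ (w = (cs.simple j * cs.simple i) ^ (2 * k) * cs.simple j) := by
      rw [conj_eq_iff, hpq, ← conj_helper₀ cs i j k]
    have c2 : (cs.simple j * ((cs.simple i * cs.simple j) ^ k * w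
          * ((cs.simple i * cs.simple j) ^ k)⁻¹) * cs.simple j = cs.simple i)
        ↔ (w = (cs.simple j * cs.simple i) ^ (2 * k + 1) * cs.simple j) := by
      rw [simple_conj_eq_iff, conj_eq_iff, hpq, ← conj_helper₁ cs i j k]
    have comp1 : cs.simple i * (cs.simple j * ((cs.simple i * cs.simple j) ^ k * w
          * ((cs.simple i * cs.simple j) ^ k)⁻¹) * cs.simple j) * cs.simple i
        = (cs.simple i * cs.simple j) ^ (k + 1) * w
            * (((cs.simple i * cs.simple j) ^ (k + 1))⁻¹) := by
      rw [pow_succ' (cs.simple i * cs.simple j) k, mul_inv_rev, mul_inv_rev,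
        cs.inv_simple, cs.inv_simple]
      group
    have hrange : 2 * (k + 1) = (2 * k) + 1 + 1 := by ring
    rw [hrange, Finset.prod_range_succ, Finset.prod_range_succ]
    simp only [c1, c2, comp1, sign_ite2]
    simp [mul_assoc]

lemma liftable : M.IsLiftable (fun i => sperm cs i) := by
  intro i j
  apply Equiv.ext
  rintro ⟨w, ε⟩
  rw [sperm_mul_pow]
  have hp : (cs.simple i * cs.simple j) ^ M i j = 1 := cs.simple_mul_simple_pow i j
  have hq : (cs.simple j * cs.simple i) ^ M i j = 1 := cs.simple_mul_simple_pow' i j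
  rw [hp]
  have hprod : (∏ n ∈ Finset.range (2 * M i j),
      (if w = (cs.simple j * cs.simple i) ^ n * cs.simple j then (-1 : ℤˣ) else 1)) = 1 := by
    rw [two_mul, Finset.prod_range_add]
    have : ∀ n, (cs.simple j * cs.simple i) ^ (M i j + n) * cs.simple j
        = (cs.simple j * cs.simple i) ^ n * cs.simple j := by
      intro n
      rw [pow_add, hq, one_mul]
    have h2 : (∏ n ∈ Finset.range (M i j),
        (if w = (cs.simple j * cs.simple i) ^ (M i j + n) * cs.simple j then (-1 : ℤˣ) else 1))
        = ∏ n ∈ Finset.range (M i j),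
          (if w = (cs.simple j * cs.simple i) ^ n * cs.simple j then (-1 : ℤˣ) else 1) :=
      Finset.prod_congr rfl (fun n _ => by rw [this n])
    rw [h2]
    exact Int.units_mul_self _
  rw [hprod]
  simp

/-- The sign representation of the Coxeter group on `W × ℤˣ`. -/
noncomputable def srep : W →* Equiv.Perm (W × ℤˣ) :=
  cs.lift ⟨fun i => sperm cs i, liftable cs⟩

lemma srep_simple (i : B) : srep cs (cs.simple i) = sperm cs i :=
  cs.lift_apply_simple (liftable cs) i

/-- Auxiliary sign of an element of `W` relative to a list. -/
noncomputable def signList (w : W) (l : List W) : ℤˣ :=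
  (l.map (fun t => if w = t then (-1 : ℤˣ) else 1)).prod

lemma signList_nil (w : W) : signList w ([] : List W) = 1 := rfl

lemma signList_cons (w h : W) (l : List W) :
    signList w (h :: l) = (if w = h then (-1 : ℤˣ) else 1) * signList w l := by
  simp [signList]

lemma mem_of_signList_ne_one (w : W) (l : List W) (h : signList w l ≠ 1) : w ∈ l := by
  induction l with
  | nil => exact absurd rfl h
  | cons a l ih =>
    rw [signList_cons] at h
    by_cases hw : w = a
    · exact hw ▸ (List.mem_cons_self : a ∈ a :: l)
    · rw [if_neg hw, one_mul] at h
      exact List.mem_cons_of_mem a (ih h)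

lemma srep_wordProd (ω : List B) (w : W) (ε : ℤˣ) :
    srep cs (cs.wordProd ω) (w, ε) =
      (cs.wordProd ω * w * (cs.wordProd ω)⁻¹, ε * signList w (cs.rightInvSeq ω)) := by
  induction ω generalizing ε with
  | nil => simp [signList_nil]
  | cons i ω ih =>
    rw [cs.wordProd_cons, map_mul, Equiv.Perm.mul_apply, ih, srep_simple, sperm_apply]
    have hris : cs.rightInvSeq (i :: ω)
        = (cs.wordProd ω)⁻¹ * cs.simple i * cs.wordProd ω :: cs.rightInvSeq ω := rfl
    rw [hris, signList_cons]
    have hcond : (cs.wordProd ω * w * (cs.wordProd ω)⁻¹ = cs.simple i)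
        ↔ (w = (cs.wordProd ω)⁻¹ * cs.simple i * cs.wordProd ω) := by
      rw [conj_eq_iff, inv_inv]
    have comp1 : cs.simple i * (cs.wordProd ω * w * (cs.wordProd ω)⁻¹) * cs.simple i
        = (cs.simple i * cs.wordProd ω) * w * (cs.simple i * cs.wordProd ω)⁻¹ := by
      rw [mul_inv_rev, cs.inv_simple]
      group
    rw [comp1]
    have hsign : (if cs.wordProd ω * w * (cs.wordProd ω)⁻¹ = cs.simple i
          then -(ε * signList w (cs.rightInvSeq ω)) else ε * signList w (cs.rightInvSeq ω))
        = ε * ((if w = (cs.wordProd ω)⁻¹ * cs.simple i * cs.wordProd ω then (-1 : ℤˣ) else 1)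
            * signList w (cs.rightInvSeq ω)) := by
      simp only [hcond]
      split_ifs <;> simp [mul_assoc, mul_comm, mul_left_comm]
    rw [hsign]

lemma srep_conj (u v : W) : ∃ δ : ℤˣ, ∀ ε, srep cs u (v, ε) = (u * v * u⁻¹, δ * ε) := by
  obtain ⟨ω, _, rfl⟩ := cs.exists_reduced_word' u
  exact ⟨signList v (cs.rightInvSeq ω), fun ε => by rw [srep_wordProd, mul_comm ε]⟩

lemma srep_reflection (t : W) (ht : cs.IsReflection t) (ε : ℤˣ) :
    srep cs t (t, ε) = (t, -ε) := by
  obtain ⟨v, i, rfl⟩ := ht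
  obtain ⟨δ₁, h₁⟩ := srep_conj cs v⁻¹ (v * cs.simple i * v⁻¹)
  obtain ⟨δ₂, h₂⟩ := srep_conj cs v (cs.simple i)
  have hinv : v⁻¹ * (v * cs.simple i * v⁻¹) * v⁻¹⁻¹ = cs.simple i := by group
  have key : ∀ ε', srep cs (v * cs.simple i * v⁻¹) (v * cs.simple i * v⁻¹, ε')
      = (v * cs.simple i * v⁻¹, δ₂ * (-(δ₁ * ε'))) := by
    intro ε'
    have : srep cs (v * cs.simple i * v⁻¹)
        = srep cs v * srep cs (cs.simple i) * srep cs v⁻¹ := by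
      rw [← map_mul, ← map_mul]
    have hsss : cs.simple i * cs.simple i * cs.simple i = cs.simple i := by
      rw [cs.simple_mul_simple_self, one_mul]
    rw [this, Equiv.Perm.mul_apply, Equiv.Perm.mul_apply, h₁, hinv, srep_simple, sperm_apply,
      if_pos rfl, hsss, h₂]
  have hunit : δ₂ * δ₁ = 1 := by
    have h3 : srep cs (v * v⁻¹) (v * cs.simple i * v⁻¹, (1 : ℤˣ))
        = (v * cs.simple i * v⁻¹, (1 : ℤˣ)) := by
      rw [mul_inv_cancel]
      simp
    rw [map_mul, Equiv.Perm.mul_apply, h₁, hinv, h₂] at h3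
    have h4 := congrArg Prod.snd h3
    simpa using h4
  rw [key ε, mul_neg, ← mul_assoc, hunit, one_mul]

lemma isRightInversion_iff_sign (w t : W) (ht : cs.IsReflection t) :
    cs.length (w * t) < cs.length w ↔ (srep cs w (t, 1)).2 = -1 := by
  have main : ∀ u : W, (srep cs u (t, 1)).2 = -1 → cs.length (u * t) < cs.length u := by
    intro u hu
    obtain ⟨ω, hω, rfl⟩ := cs.exists_reduced_word' u
    rw [srep_wordProd] at hu
    have hs : signList t (cs.rightInvSeq ω) = -1 := by simpa using hu
    have hmem : t ∈ cs.rightInvSeq ω := by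
      apply mem_of_signList_ne_one
      rw [hs]
      decide
    exact (cs.isRightInversion_of_mem_rightInvSeq hω hmem).2
  constructor
  · intro hlt
    obtain ⟨δ, hδ⟩ := srep_conj cs w t
    rcases Int.units_eq_one_or δ with h1 | h1
    · exfalso
      have hsign : (srep cs (w * t) (t, 1)).2 = -1 := by
        rw [map_mul, Equiv.Perm.mul_apply, srep_reflection cs t ht, hδ]
        simp [h1]
      have := main (w * t) hsign
      rw [mul_assoc, ht.mul_self, mul_one] at this
      omega
    · rw [hδ 1, h1]
      simp
  · exact main w

/-- **Strong exchange property.** -/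
lemma mem_rightInvSeq_of_isRightInversion {ω : List B} (hω : cs.IsReduced ω) {t : W}
    (ht : cs.IsRightInversion (cs.wordProd ω) t) : t ∈ cs.rightInvSeq ω := by
  have h := (isRightInversion_iff_sign cs (cs.wordProd ω) t ht.1).mp ht.2
  rw [srep_wordProd] at h
  have hs : signList t (cs.rightInvSeq ω) = -1 := by simpa using h
  apply mem_of_signList_ne_one
  rw [hs]
  decide

/-! ### Bruhat order basics -/

lemma bruhat_refl (u : W) : bruhatLE cs u u := Relation.ReflTransGen.refl

lemma bruhat_trans {u v z : W} (h1 : bruhatLE cs u v) (h2 : bruhatLE cs v z) :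
    bruhatLE cs u z := Relation.ReflTransGen.trans h1 h2

lemma bruhat_step {u t : W} (ht : cs.IsReflection t)
    (h : cs.length (u * t) < cs.length u) : bruhatLE cs (u * t) u := by
  apply Relation.ReflTransGen.single
  refine ⟨t, ht, ?_, h⟩
  rw [mul_assoc, ht.mul_self, mul_one]

lemma bruhat_step' {u t : W} (ht : cs.IsReflection t)
    (h : cs.length u < cs.length (u * t)) : bruhatLE cs u (u * t) :=
  Relation.ReflTransGen.single ⟨t, ht, rfl, h⟩

lemma bruhat_length_le {u v : W} (h : bruhatLE cs u v) : cs.length u ≤ cs.length v := by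
  induction h with
  | refl => exact le_refl _
  | tail _ h2 ih =>
    obtain ⟨t, _, _, hlt⟩ := h2
    omega

lemma bruhat_le_one {u : W} (h : bruhatLE cs u 1) : u = 1 := by
  have := bruhat_length_le cs h
  rw [cs.length_one] at this
  exact cs.length_eq_zero_iff.mp (Nat.le_zero.mp this)

/-! ### The one-step Demazure operations -/

/-- The longer of `u` and `u * sᵢ`. -/
noncomputable def dstar (u : W) (i : B) : W :=
  if cs.length (u * cs.simple i) < cs.length u then u else u * cs.simple i

/-- The shorter of `u` and `u * sᵢ`. -/
noncomputable def dflat (u : W) (i : B) : W :=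
  if cs.length (u * cs.simple i) < cs.length u then u * cs.simple i else u

lemma length_lt_or (u : W) (i : B) :
    cs.length (u * cs.simple i) < cs.length u ∨ cs.length u < cs.length (u * cs.simple i) :=
  Nat.lt_or_gt_of_ne (cs.length_mul_simple_ne u i)

lemma dflat_le (u : W) (i : B) : bruhatLE cs (dflat cs u i) u := by
  rw [dflat]
  split
  · exact bruhat_step cs (cs.isReflection_simple i) (by assumption)
  · exact bruhat_refl cs u

lemma le_dstar (u : W) (i : B) : bruhatLE cs u (dstar cs u i) := by
  rw [dstar]
  split
  · exact bruhat_refl cs u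
  · rcases length_lt_or cs u i with h | h
    · omega
    · exact bruhat_step' cs (cs.isReflection_simple i) h

lemma dflat_mul (u : W) (i : B) : dflat cs (u * cs.simple i) i = dflat cs u i := by
  have hc : u * cs.simple i * cs.simple i = u := cs.simple_mul_simple_cancel_right i
  rw [dflat, dflat, hc]
  rcases length_lt_or cs u i with h | h
  · rw [if_neg (by omega), if_pos h]
  · rw [if_pos h, if_neg (by omega)]

lemma dstar_mul (u : W) (i : B) : dstar cs (u * cs.simple i) i = dstar cs u i := by
  have hc : u * cs.simple i * cs.simple i = u := cs.simple_mul_simple_cancel_right i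
  rw [dstar, dstar, hc]
  rcases length_lt_or cs u i with h | h
  · rw [if_neg (by omega), if_pos h]
  · rw [if_pos h, if_neg (by omega)]

lemma dflat_eq_or (u : W) (i : B) : dflat cs u i = u ∨ dflat cs u i = u * cs.simple i := by
  rw [dflat]; split
  · right; rfl
  · left; rfl

lemma dstar_eq_or (u : W) (i : B) : dstar cs u i = u ∨ dstar cs u i = u * cs.simple i := by
  rw [dstar]; split
  · left; rfl
  · right; rfl

lemma dflat_dstar (u : W) (i : B) : dflat cs (dstar cs u i) i = dflat cs u i := by
  rcases dstar_eq_or cs u i with h | h <;> rw [h]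
  exact dflat_mul cs u i

lemma dstar_dflat (u : W) (i : B) : dstar cs (dflat cs u i) i = dstar cs u i := by
  rcases dflat_eq_or cs u i with h | h <;> rw [h]
  exact dstar_mul cs u i

/-! ### The key consequence of strong exchange -/

lemma key_exchange (b t : W) (ht : cs.IsReflection t) (h1 : cs.length (b * t) < cs.length b)
    (i : B) (h2 : cs.length (b * cs.simple i) < cs.length b) :
    b * t = b * cs.simple i ∨ ∃ t', cs.IsReflection t' ∧
      b * t * cs.simple i = (b * cs.simple i) * t' ∧
      cs.length (b * t * cs.simple i) < cs.length (b * cs.simple i) := by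
  obtain ⟨ω', hred', heq'⟩ := cs.exists_reduced_word' (b * cs.simple i)
  have hb : cs.length (b * cs.simple i) + 1 = cs.length b := by
    rcases cs.length_mul_simple b i with h | h
    · omega
    · exact h
  have hπ : cs.wordProd (ω' ++ [i]) = b := by
    rw [cs.wordProd_append, cs.wordProd_singleton, ← heq',
      cs.simple_mul_simple_cancel_right]
  have hred : cs.IsReduced (ω' ++ [i]) := by
    rw [CoxeterSystem.IsReduced, hπ, List.length_append, List.length_singleton]
    rw [CoxeterSystem.IsReduced] at hred'
    rw [← heq'] at hred'
    omega
  have hmem : t ∈ cs.rightInvSeq (ω' ++ [i]) := by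
    apply mem_rightInvSeq_of_isRightInversion cs hred
    rw [hπ]
    exact ⟨ht, h1⟩
  obtain ⟨k, hk, hget⟩ := List.mem_iff_getElem.mp hmem
  rw [cs.length_rightInvSeq] at hk
  have herase : cs.wordProd ((ω' ++ [i]).eraseIdx k) = b * t := by
    rw [← cs.wordProd_mul_getD_rightInvSeq, hπ, List.getD_eq_getElem _ 1
      (by rw [cs.length_rightInvSeq]; exact hk), hget]
  have hω'len : ω'.length = cs.length (b * cs.simple i) := by
    rw [CoxeterSystem.IsReduced] at hred'
    rw [← heq'] at hred'
    omega
  rcases Nat.lt_or_ge k ω'.length with hlt | hge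
  · right
    have he : (ω' ++ [i]).eraseIdx k = ω'.eraseIdx k ++ [i] :=
      List.eraseIdx_append_of_lt_length hlt _
    have h3 : b * t = cs.wordProd (ω'.eraseIdx k) * cs.simple i := by
      rw [← herase, he, cs.wordProd_append, cs.wordProd_singleton]
    have h4 : b * t * cs.simple i = cs.wordProd (ω'.eraseIdx k) := by
      rw [h3, cs.simple_mul_simple_cancel_right]
    have hk2 : k < (cs.rightInvSeq ω').length := by rw [cs.length_rightInvSeq]; exact hlt
    set t' := (cs.rightInvSeq ω').getD k 1 with ht'def
    have h5 : cs.wordProd (ω'.eraseIdx k) = (b * cs.simple i) * t' := by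
      rw [← cs.wordProd_mul_getD_rightInvSeq, ← heq']
    have ht'mem : t' ∈ cs.rightInvSeq ω' := by
      rw [ht'def, List.getD_eq_getElem _ 1 hk2]
      exact List.getElem_mem hk2
    have ht' := cs.isRightInversion_of_mem_rightInvSeq hred' ht'mem
    rw [← heq'] at ht'
    refine ⟨t', ht'.1, by rw [h4, h5], ?_⟩
    rw [h4, h5]
    exact ht'.2
  · left
    have hklen : k < ω'.length + 1 := by
      rw [List.length_append, List.length_singleton] at hk
      exact hk
    have hkeq : k = ω'.length := by omega
    have he : (ω' ++ [i]).eraseIdx k = ω' := by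
      rw [hkeq, List.eraseIdx_append_of_length_le (le_refl _)]
      simp
    rw [← herase, he, ← heq']

/-! ### One-step monotonicity of the Demazure operations (via strong exchange) -/

lemma step_dstar {a b : W} (i : B)
    (hab : ∃ t : W, cs.IsReflection t ∧ b = a * t ∧ cs.length a < cs.length b) :
    bruhatLE cs (dstar cs a i) (dstar cs b i) := by
  obtain ⟨t, ht, rfl, hlt⟩ := hab
  by_cases ha : cs.length (a * cs.simple i) < cs.length a
  · have hda : dstar cs a i = a := by rw [dstar, if_pos ha]
    rw [hda]
    exact bruhat_trans cs (bruhat_step' cs ht hlt) (le_dstar cs (a * t) i)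
  · have ha' : cs.length a < cs.length (a * cs.simple i) := by
      rcases length_lt_or cs a i with h | h
      · omega
      · exact h
    have hda : dstar cs a i = a * cs.simple i := by rw [dstar, if_neg ha]
    rw [hda]
    by_cases hb : cs.length (a * t * cs.simple i) < cs.length (a * t)
    · have hdb : dstar cs (a * t) i = a * t := by rw [dstar, if_pos hb]
      rw [hdb]
      have h1 : cs.length ((a * t) * t) < cs.length (a * t) := by
        rw [mul_assoc, ht.mul_self, mul_one]; exact hlt
      rcases key_exchange cs (a * t) t ht h1 i hb with heq | ⟨t', ht', heq, hlen⟩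
      · have ha2 : a = a * t * cs.simple i := by
          rw [← heq, mul_assoc, ht.mul_self, mul_one]
        have h3 : a * cs.simple i = a * t := by
          calc a * cs.simple i = a * t * cs.simple i * cs.simple i := by rw [← ha2]
            _ = a * t := cs.simple_mul_simple_cancel_right i
        rw [h3]
        exact bruhat_refl cs (a * t)
      · rw [mul_assoc a t t, ht.mul_self, mul_one] at heq hlen
        have step1 : bruhatLE cs (a * cs.simple i) (a * t * cs.simple i) := by
          rw [heq] at hlen ⊢
          exact bruhat_step cs ht' hlen
        exact bruhat_trans cs step1 (bruhat_step cs (cs.isReflection_simple i) hb)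
    · have hdb : dstar cs (a * t) i = a * t * cs.simple i := by rw [dstar, if_neg hb]
      rw [hdb]
      have hconj : cs.IsReflection (cs.simple i * t * cs.simple i) := by
        have := ht.conj (cs.simple i)
        rwa [cs.inv_simple] at this
      apply Relation.ReflTransGen.single
      refine ⟨cs.simple i * t * cs.simple i, hconj, ?_, ?_⟩
      · simp [mul_assoc, cs.simple_mul_simple_cancel_left]
      · have h1 : cs.length (a * cs.simple i) = cs.length a + 1 := by
          rcases cs.length_mul_simple a i with h | h
          · exact h
          · omega
        have hb' : cs.length (a * t) < cs.length (a * t * cs.simple i) := by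
          rcases length_lt_or cs (a * t) i with h | h
          · omega
          · exact h
        omega

lemma step_dflat {a b : W} (i : B)
    (hab : ∃ t : W, cs.IsReflection t ∧ b = a * t ∧ cs.length a < cs.length b) :
    bruhatLE cs (dflat cs a i) (dflat cs b i) := by
  obtain ⟨t, ht, rfl, hlt⟩ := hab
  by_cases hb : cs.length (a * t * cs.simple i) < cs.length (a * t)
  · have hdb : dflat cs (a * t) i = a * t * cs.simple i := by rw [dflat, if_pos hb]
    rw [hdb]
    by_cases ha : cs.length (a * cs.simple i) < cs.length a
    · have hda : dflat cs a i = a * cs.simple i := by rw [dflat, if_pos ha]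
      rw [hda]
      have hconj : cs.IsReflection (cs.simple i * t * cs.simple i) := by
        have := ht.conj (cs.simple i)
        rwa [cs.inv_simple] at this
      apply Relation.ReflTransGen.single
      refine ⟨cs.simple i * t * cs.simple i, hconj, ?_, ?_⟩
      · simp [mul_assoc, cs.simple_mul_simple_cancel_left]
      · have h1 : cs.length (a * cs.simple i) + 1 = cs.length a := by
          rcases cs.length_mul_simple a i with h | h
          · omega
          · exact h
        have h2 : cs.length (a * t * cs.simple i) + 1 = cs.length (a * t) := by
          rcases cs.length_mul_simple (a * t) i with h | h
          · omega
          · exact h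
        omega
    · have hda : dflat cs a i = a := by rw [dflat, if_neg ha]
      rw [hda]
      have ha' : cs.length a < cs.length (a * cs.simple i) := by
        rcases length_lt_or cs a i with h | h
        · omega
        · exact h
      have h1 : cs.length ((a * t) * t) < cs.length (a * t) := by
        rw [mul_assoc, ht.mul_self, mul_one]; exact hlt
      rcases key_exchange cs (a * t) t ht h1 i hb with heq | ⟨t', ht', heq, hlen⟩
      · have ha2 : a = a * t * cs.simple i := by
          rw [← heq, mul_assoc, ht.mul_self, mul_one]
        rw [← ha2]
        exact bruhat_refl cs a
      · rw [mul_assoc a t t, ht.mul_self, mul_one] at heq hlen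
        have step2 : bruhatLE cs (a * cs.simple i) (a * t * cs.simple i) := by
          rw [heq] at hlen ⊢
          exact bruhat_step cs ht' hlen
        exact bruhat_trans cs (bruhat_step' cs (cs.isReflection_simple i) ha') step2
  · have hdb : dflat cs (a * t) i = a * t := by rw [dflat, if_neg hb]
    rw [hdb]
    exact bruhat_trans cs (dflat_le cs a i) (bruhat_step' cs ht hlt)

lemma mono_dstar {a b : W} (h : bruhatLE cs a b) (i : B) :
    bruhatLE cs (dstar cs a i) (dstar cs b i) := by
  induction h with
  | refl => exact bruhat_refl cs _
  | tail h1 h2 ih => exact bruhat_trans cs ih (step_dstar cs i h2)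

lemma mono_dflat {a b : W} (h : bruhatLE cs a b) (i : B) :
    bruhatLE cs (dflat cs a i) (dflat cs b i) := by
  induction h with
  | refl => exact bruhat_refl cs _
  | tail h1 h2 ih => exact bruhat_trans cs ih (step_dflat cs i h2)

/-- The lifting property, in adjunction form. -/
lemma bruhat_dstar_iff (u x : W) (i : B) :
    bruhatLE cs u (dstar cs x i) ↔ bruhatLE cs (dflat cs u i) x := by
  constructor
  · intro h
    have h2 := mono_dflat cs h i
    rw [dflat_dstar] at h2
    exact bruhat_trans cs h2 (dflat_le cs x i)
  · intro h
    have h2 := mono_dstar cs h i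
    rw [dstar_dflat] at h2
    exact bruhat_trans cs (le_dstar cs u i) h2

/-! ### The main theorem -/

lemma main_aux : ∀ (n : ℕ) (x w : W), cs.length x = n →
    (∃ ymin : W, bruhatLE cs (w * ymin) x ∧
      (∀ y : W, bruhatLE cs (w * y) x → bruhatLE cs ymin y) ∧
      cs.length ymin + cs.length (w * ymin) = cs.length w) ∧
    (∃ ymax : W, bruhatLE cs (w * ymax) x ∧
      (∀ y : W, bruhatLE cs (w * y) x → bruhatLE cs y ymax) ∧
      cs.length ymax = cs.length w + cs.length (w * ymax)) := by
  intro n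
  induction n using Nat.strong_induction_on with
  | _ n ih =>
  intro x w hx
  by_cases hx1 : x = 1
  · subst hx1
    have hmem : bruhatLE cs (w * w⁻¹) 1 := by
      rw [mul_inv_cancel]
      exact bruhat_refl cs 1
    have huniq : ∀ y : W, bruhatLE cs (w * y) 1 → y = w⁻¹ := by
      intro y hy
      have h1 : w * y = 1 := bruhat_le_one cs hy
      exact eq_inv_of_mul_eq_one_right h1
    constructor
    · refine ⟨w⁻¹, hmem, ?_, ?_⟩
      · intro y hy
        rw [← huniq y hy]
        exact bruhat_refl cs y
      · rw [mul_inv_cancel, cs.length_one, cs.length_inv]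
        omega
    · refine ⟨w⁻¹, hmem, ?_, ?_⟩
      · intro y hy
        rw [huniq y hy]
        exact bruhat_refl cs w⁻¹
      · rw [mul_inv_cancel, cs.length_one, cs.length_inv]
        omega
  · obtain ⟨i, hdesc⟩ := cs.exists_rightDescent_of_ne_one hx1
    set x' := x * cs.simple i with hx'def
    have hdesc' : cs.length x' < cs.length x := hdesc
    have hxds : dstar cs x' i = x := by
      have hcan : x' * cs.simple i = x := by
        rw [hx'def, cs.simple_mul_simple_cancel_right]
      rw [dstar, hcan, if_neg (by omega)]
    obtain ⟨⟨m, hm1, hm2, hm3⟩, ⟨Mx, hM1, hM2, hM3⟩⟩ :=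
      ih (cs.length x') (by omega) x' w rfl
    constructor
    · refine ⟨dflat cs m i, ?_, ?_, ?_⟩
      · rw [← hxds, bruhat_dstar_iff]
        have hkey : dflat cs (w * dflat cs m i) i = dflat cs (w * m) i := by
          rcases dflat_eq_or cs m i with h | h <;> rw [h]
          rw [← mul_assoc, dflat_mul]
        rw [hkey]
        exact bruhat_trans cs (dflat_le cs (w * m) i) hm1
      · intro y hy
        rw [← hxds, bruhat_dstar_iff] at hy
        rcases dflat_eq_or cs (w * y) i with h | h
        · rw [h] at hy
          exact bruhat_trans cs (dflat_le cs m i) (hm2 y hy)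
        · rw [h, mul_assoc] at hy
          have h2 := mono_dflat cs (hm2 (y * cs.simple i) hy) i
          rw [dflat_mul] at h2
          exact bruhat_trans cs h2 (dflat_le cs y i)
      · by_cases hms : cs.length (m * cs.simple i) < cs.length m
        · have hd : dflat cs m i = m * cs.simple i := by rw [dflat, if_pos hms]
          rw [hd]
          have hm4 : cs.length (m * cs.simple i) + 1 = cs.length m := by
            rcases cs.length_mul_simple m i with h | h
            · omega
            · exact h
          rcases cs.length_mul_simple (w * m) i with h | h
          · rw [← mul_assoc]
            omega
          · exfalso
            have hstep : bruhatLE cs (w * (m * cs.simple i)) x' := by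
              rw [← mul_assoc]
              exact bruhat_trans cs
                (bruhat_step cs (cs.isReflection_simple i) (by omega)) hm1
            have := bruhat_length_le cs (hm2 (m * cs.simple i) hstep)
            omega
        · have hd : dflat cs m i = m := by rw [dflat, if_neg hms]
          rw [hd]
          exact hm3
    · refine ⟨dstar cs Mx i, ?_, ?_, ?_⟩
      · rw [← hxds, bruhat_dstar_iff]
        have hkey : dflat cs (w * dstar cs Mx i) i = dflat cs (w * Mx) i := by
          rcases dstar_eq_or cs Mx i with h | h <;> rw [h]
          rw [← mul_assoc, dflat_mul]
        rw [hkey]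
        exact bruhat_trans cs (dflat_le cs (w * Mx) i) hM1
      · intro y hy
        rw [← hxds, bruhat_dstar_iff] at hy
        rcases dflat_eq_or cs (w * y) i with h | h
        · rw [h] at hy
          exact bruhat_trans cs (hM2 y hy) (le_dstar cs Mx i)
        · rw [h, mul_assoc] at hy
          have h2 := mono_dstar cs (hM2 (y * cs.simple i) hy) i
          rw [dstar_mul] at h2
          exact bruhat_trans cs (le_dstar cs y i) h2
      · by_cases hMs : cs.length (Mx * cs.simple i) < cs.length Mx
        · have hd : dstar cs Mx i = Mx := by rw [dstar, if_pos hMs]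
          rw [hd]
          exact hM3
        · have hd : dstar cs Mx i = Mx * cs.simple i := by rw [dstar, if_neg hMs]
          rw [hd]
          have hM4 : cs.length (Mx * cs.simple i) = cs.length Mx + 1 := by
            rcases cs.length_mul_simple Mx i with h | h
            · exact h
            · omega
          rcases cs.length_mul_simple (w * Mx) i with h | h
          · rw [← mul_assoc]
            omega
          · exfalso
            have hstep : bruhatLE cs (w * (Mx * cs.simple i)) x' := by
              rw [← mul_assoc]
              exact bruhat_trans cs
                (bruhat_step cs (cs.isReflection_simple i) (by omega)) hM1
            have := bruhat_length_le cs (hM2 (Mx * cs.simple i) hstep)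
            omega

end BruhatAux

/-- The set `{y | w y ≤ x}` has a smallest element `y_min` and a largest element `y_max`
for the Bruhat order, with `ℓ(y_min) = ℓ(w) - ℓ(w y_min)` and
`ℓ(y_max) = ℓ(w) + ℓ(w y_max)`. -/
theorem exists_min_max_bruhat (cs : CoxeterSystem M W) (x w : W) :
    (∃ ymin : W, bruhatLE cs (w * ymin) x ∧
      (∀ y : W, bruhatLE cs (w * y) x → bruhatLE cs ymin y) ∧
      cs.length ymin + cs.length (w * ymin) = cs.length w) ∧
    (∃ ymax : W, bruhatLE cs (w * ymax) x ∧
      (∀ y : W, bruhatLE cs (w * y) x → bruhatLE cs y ymax) ∧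
      cs.length ymax = cs.length w + cs.length (w * ymax)) :=
  BruhatAux.main_aux cs (cs.length x) x w rfl
end

section
/- Let (W, S) be a Coxeter system and let x', w, w' ∈ W with w ≤ w' in the Bruhat order. Then: (i) there exists x ≤ x' such that x·w ≤ x'·w'; and (ii) there exists x ≤ x' such that x'·w ≤ x·w'. -/
open CoxeterSystem List

open scoped Classical

variable {B W : Type*} [Group W] {M : CoxeterMatrix B}

namespace BruhatAux

variable (cs : CoxeterSystem M W)

/-- The basic building block of the reflection cocycle. -/
noncomputable def sigma (i : B) : Function.End (W × ZMod 2) :=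
  fun p => (cs.simple i * p.1 * cs.simple i, p.2 + if p.1 = cs.simple i then 1 else 0)

theorem sigma_word (ω : List B) (p : W × ZMod 2) :
    (ω.map (sigma cs)).prod p =
      (cs.wordProd ω * p.1 * (cs.wordProd ω)⁻¹,
        p.2 + (List.count p.1 (cs.rightInvSeq ω) : ZMod 2)) := by
  induction ω generalizing p with
  | nil => show p = _ ; simp
  | cons i ω ih =>
    obtain ⟨t, ε⟩ := p
    rw [List.map_cons, List.prod_cons]
    show sigma cs i ((ω.map (sigma cs)).prod (t, ε)) = _
    rw [ih]
    simp only [sigma, rightInvSeq, cs.wordProd_cons, List.count_cons, Prod.mk.injEq]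
    constructor
    · simp [mul_assoc, mul_inv_rev, cs.inv_simple]
    · push_cast
      rw [add_assoc]
      congr 2
      have : (cs.wordProd ω * t * (cs.wordProd ω)⁻¹ = cs.simple i)
          ↔ ((cs.wordProd ω)⁻¹ * cs.simple i * cs.wordProd ω == t) = true := by
        rw [beq_iff_eq, eq_comm]
        constructor <;> intro h
        · rw [h]; group
        · rw [← h]; group
      simp only [this]

theorem drop_alternatingWord (i j : B) (n d : ℕ) :
    (alternatingWord i j n).drop d = alternatingWord i j (n - d) := by
  induction d generalizing n with
  | zero => simp
  | succ d ih =>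
    cases n with
    | zero => simp [alternatingWord]
    | succ n =>
      rw [alternatingWord_succ' i j n, List.drop_succ_cons, ih]
      congr 1
      omega

theorem wp_alt_add {i j : B} {m : ℕ} (hm : (cs.simple i * cs.simple j) ^ m = 1) (r : ℕ) :
    cs.wordProd (alternatingWord i j (m + r)) =
      cs.wordProd (alternatingWord i j m) * cs.wordProd (alternatingWord i j r) := by
  set q := cs.simple i * cs.simple j with hq
  have hconj : ∀ n : ℕ, cs.simple j * q ^ n * cs.simple j = (q ^ n)⁻¹ := by
    intro n
    have hc : cs.simple j * q * (cs.simple j)⁻¹ = q⁻¹ := by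
      rw [hq, cs.inv_simple]
      simp [mul_assoc, cs.simple_mul_simple_self]
    calc cs.simple j * q ^ n * cs.simple j
        = cs.simple j * q ^ n * (cs.simple j)⁻¹ := by rw [cs.inv_simple]
      _ = (cs.simple j * q * (cs.simple j)⁻¹) ^ n := (conj_pow ..).symm
      _ = (q⁻¹) ^ n := by rw [hc]
      _ = (q ^ n)⁻¹ := inv_pow q n
  rw [cs.prod_alternatingWord_eq_mul_pow, cs.prod_alternatingWord_eq_mul_pow,
    cs.prod_alternatingWord_eq_mul_pow, ← hq]
  have evp : ∀ n : ℕ, n % 2 = 0 → Even n := fun n h => Nat.even_iff.mpr h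
  have odp : ∀ n : ℕ, n % 2 = 1 → ¬ Even n := fun n h => by rw [Nat.even_iff]; omega
  rcases Nat.even_or_odd m with ⟨b, hb⟩ | ⟨b, hb⟩ <;>
    rcases Nat.even_or_odd r with ⟨a, ha⟩ | ⟨a, ha⟩
  · rw [if_pos (evp _ (by omega)), if_pos (evp _ (by omega)), if_pos (evp _ (by omega)),
      (by omega : (m + r) / 2 = b + a), (by omega : m / 2 = b), (by omega : r / 2 = a), pow_add]
    group
  · -- m even, r odd
    rw [if_neg (odp _ (by omega)), if_pos (evp _ (by omega)), if_neg (odp _ (by omega)),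
      (by omega : (m + r) / 2 = b + a), (by omega : m / 2 = b), (by omega : r / 2 = a)]
    have hbb : q ^ b * q ^ b = 1 := by
      rw [← pow_add, (by omega : b + b = m), hm]
    have hcomm : cs.simple j * q ^ b = q ^ b * cs.simple j := by
      have h1 := hconj b
      have h2 : (q ^ b)⁻¹ = q ^ b := by rw [inv_eq_iff_mul_eq_one]; exact hbb
      rw [h2] at h1
      calc cs.simple j * q ^ b = cs.simple j * q ^ b * cs.simple j * cs.simple j := by
            rw [mul_assoc _ (cs.simple j), cs.simple_mul_simple_self, mul_one]
        _ = q ^ b * cs.simple j := by rw [h1]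
    rw [pow_add, ← mul_assoc, hcomm, mul_assoc, one_mul]
  · -- m odd, r even
    rw [if_neg (odp _ (by omega)), if_neg (odp _ (by omega)), if_pos (evp _ (by omega)),
      (by omega : (m + r) / 2 = b + a), (by omega : m / 2 = b), (by omega : r / 2 = a)]
    rw [one_mul, pow_add]
    group
  · -- m odd, r odd
    rw [if_pos (evp _ (by omega)), if_neg (odp _ (by omega)), if_neg (odp _ (by omega)),
      (by omega : (m + r) / 2 = b + a + 1), (by omega : m / 2 = b), (by omega : r / 2 = a)]
    have h1 := hconj b
    have h2 : cs.simple j * q ^ b * (cs.simple j * q ^ a) = (q ^ b)⁻¹ * q ^ a := by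
      rw [← mul_assoc, mul_assoc _ (q ^ b), ← mul_assoc, h1]
    rw [h2, eq_inv_mul_iff_mul_eq, one_mul, ← pow_add,
      (by omega : b + (b + a + 1) = m + a), pow_add, hm, one_mul]

theorem ris_alt_getD (i j : B) {n k : ℕ} (h : k < n) :
    (cs.rightInvSeq (alternatingWord i j n)).getD k 1 =
      (cs.wordProd (alternatingWord i j (n - (k + 1))))⁻¹
        * cs.wordProd (alternatingWord i j (n - k)) := by
  rw [cs.getD_rightInvSeq, drop_alternatingWord]
  have h1 : n - k = (n - (k + 1)) + 1 := by omega
  have h2 : (alternatingWord i j n)[k]?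
      = some (if Even (n - (k + 1)) then j else i) := by
    have h3 := List.getElem?_drop (xs := alternatingWord i j n) (i := k) (j := 0)
    rw [Nat.add_zero] at h3
    rw [← h3, drop_alternatingWord, h1, alternatingWord_succ']
    rfl
  rw [h2, h1, alternatingWord_succ', cs.wordProd_cons]
  simp [mul_assoc]

theorem ris_braid_take_drop (i j : B) {m : ℕ}
    (hm : (cs.simple i * cs.simple j) ^ m = 1) :
    (cs.rightInvSeq (alternatingWord i j (2 * m))).take m
      = (cs.rightInvSeq (alternatingWord i j (2 * m))).drop m := by
  have hlen : (cs.rightInvSeq (alternatingWord i j (2 * m))).length = 2 * m := by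
    rw [cs.length_rightInvSeq, length_alternatingWord]
  apply List.ext_getElem
  · rw [List.length_take, List.length_drop, hlen]; omega
  intro k hk1 hk2
  have hkm : k < m := by rw [List.length_take, hlen] at hk1; omega
  rw [List.getElem_take, List.getElem_drop]
  rw [← List.getD_eq_getElem _ 1 (by rw [hlen]; omega : k < _),
    ← List.getD_eq_getElem _ 1 (by rw [hlen]; omega : m + k < _)]
  rw [ris_alt_getD cs i j (by omega : k < 2 * m),
    ris_alt_getD cs i j (by omega : m + k < 2 * m)]
  rw [(by omega : 2 * m - (k + 1) = m + (m - (k + 1))), (by omega : 2 * m - k = m + (m - k)),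
    wp_alt_add cs hm, wp_alt_add cs hm,
    (by omega : 2 * m - (m + k + 1) = m - (k + 1)), (by omega : 2 * m - (m + k) = m - k)]
  group

theorem count_ris_braid (i j : B) {m : ℕ}
    (hm : (cs.simple i * cs.simple j) ^ m = 1) (t : W) :
    ((cs.rightInvSeq (alternatingWord i j (2 * m))).count t : ZMod 2) = 0 := by
  set L := cs.rightInvSeq (alternatingWord i j (2 * m)) with hL
  have h : L.count t = 2 * ((L.take m).count t) := by
    conv_lhs => rw [← List.take_append_drop m L]
    rw [List.count_append, ← ris_braid_take_drop cs i j hm, ← hL, two_mul]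
  rw [h]
  push_cast
  rw [(by decide : (2 : ZMod 2) = 0), zero_mul]

theorem sigma_braid (i j : B) : (sigma cs i * sigma cs j) ^ M i j = 1 := by
  have hw : ∀ m : ℕ, (sigma cs i * sigma cs j) ^ m
      = ((alternatingWord i j (2 * m)).map (sigma cs)).prod := by
    intro m
    induction m with
    | zero => simp [alternatingWord]
    | succ m ih =>
      have h2 : alternatingWord i j (2 * (m + 1)) = i :: j :: alternatingWord i j (2 * m) := by
        rw [(by omega : 2 * (m + 1) = (2 * m + 1) + 1), alternatingWord_succ',
          if_neg (by rw [Nat.even_iff]; omega), alternatingWord_succ',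
          if_pos (by rw [Nat.even_iff]; omega)]
      rw [pow_succ', ih, h2, List.map_cons, List.map_cons, List.prod_cons, List.prod_cons,
        mul_assoc]
  rw [hw]
  funext p
  show ((alternatingWord i j (2 * M i j)).map (sigma cs)).prod p = p
  rw [sigma_word]
  have hπ : cs.wordProd (alternatingWord i j (2 * M i j)) = 1 := by
    rw [cs.prod_alternatingWord_eq_mul_pow, if_pos (by rw [Nat.even_iff]; omega),
      (by omega : 2 * M i j / 2 = M i j), cs.simple_mul_simple_pow, one_mul]
  rw [hπ, count_ris_braid cs i j (cs.simple_mul_simple_pow i j)]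
  simp

/-- The reflection cocycle homomorphism. -/
noncomputable def refHom : W →* Function.End (W × ZMod 2) :=
  cs.lift ⟨fun i => sigma cs i, fun i j => sigma_braid cs i j⟩

/-- The reflection cocycle. -/
noncomputable def nn (w t : W) : ZMod 2 := (refHom cs w (t, 0)).2

theorem refHom_wordProd (ω : List B) :
    refHom cs (cs.wordProd ω) = (ω.map (sigma cs)).prod := by
  induction ω with
  | nil => rw [cs.wordProd_nil, map_one]; rfl
  | cons i ω ih =>
    rw [cs.wordProd_cons, map_mul, ih, List.map_cons, List.prod_cons]
    congr 1
    exact cs.lift_apply_simple _ i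

theorem nn_wordProd (ω : List B) (t : W) :
    nn cs (cs.wordProd ω) t = (List.count t (cs.rightInvSeq ω) : ZMod 2) := by
  unfold nn
  rw [refHom_wordProd, sigma_word, zero_add]

theorem refHom_apply (w t : W) (ε : ZMod 2) :
    refHom cs w (t, ε) = (w * t * w⁻¹, ε + nn cs w t) := by
  obtain ⟨ω, rfl⟩ := cs.wordProd_surjective w
  rw [refHom_wordProd, sigma_word, nn_wordProd]

theorem nn_cocycle (u v t : W) :
    nn cs (u * v) t = nn cs v t + nn cs u (v * t * v⁻¹) := by
  have h1 : refHom cs (u * v) (t, 0) = refHom cs u (refHom cs v (t, 0)) := by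
    rw [map_mul]; rfl
  unfold nn
  rw [h1, refHom_apply cs v, zero_add, refHom_apply cs u]
  rfl

theorem nn_one (t : W) : nn cs 1 t = 0 := by
  unfold nn
  rw [map_one]
  rfl

theorem nn_simple (i : B) (t : W) :
    nn cs (cs.simple i) t = if t = cs.simple i then 1 else 0 := by
  have hs : refHom cs (cs.simple i) = sigma cs i := cs.lift_apply_simple _ i
  unfold nn
  rw [hs]
  show (0 : ZMod 2) + _ = _
  rw [zero_add]

theorem nn_refl_self {t : W} (ht : cs.IsReflection t) : nn cs t t = 1 := by
  obtain ⟨w, i, rfl⟩ := ht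
  have hinv : nn cs w⁻¹ (w * cs.simple i * w⁻¹) = nn cs w (cs.simple i) := by
    have h0 : nn cs (w⁻¹ * w) (cs.simple i) = 0 := by rw [inv_mul_cancel, nn_one]
    rw [nn_cocycle] at h0
    revert h0
    generalize nn cs w (cs.simple i) = a
    generalize nn cs w⁻¹ (w * cs.simple i * w⁻¹) = b
    revert a b; decide
  have hsplit : nn cs (w * cs.simple i * w⁻¹) (w * cs.simple i * w⁻¹)
      = nn cs (cs.simple i * w⁻¹) (w * cs.simple i * w⁻¹)
        + nn cs w ((cs.simple i * w⁻¹) * (w * cs.simple i * w⁻¹) * (cs.simple i * w⁻¹)⁻¹) := by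
    rw [← nn_cocycle]
    congr 1
    group
  have hconj : (cs.simple i * w⁻¹) * (w * cs.simple i * w⁻¹) * (cs.simple i * w⁻¹)⁻¹
      = cs.simple i := by
    rw [mul_inv_rev, cs.inv_simple, inv_inv]
    simp [mul_assoc, cs.simple_mul_simple_cancel_left]
  have hstep : nn cs (cs.simple i * w⁻¹) (w * cs.simple i * w⁻¹)
      = nn cs w⁻¹ (w * cs.simple i * w⁻¹) + 1 := by
    rw [nn_cocycle]
    congr 1
    rw [(by group : w⁻¹ * (w * cs.simple i * w⁻¹) * w⁻¹⁻¹ = cs.simple i), nn_simple, if_pos rfl]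
  rw [hsplit, hconj, hstep, hinv]
  generalize nn cs w (cs.simple i) = a
  revert a; decide

theorem length_mul_lt_of_nn_eq_one {w t : W} (h : nn cs w t = 1) :
    cs.length (w * t) < cs.length w := by
  obtain ⟨ω, hω, rfl⟩ := cs.exists_reduced_word' w
  rw [nn_wordProd] at h
  have hmem : t ∈ cs.rightInvSeq ω := by
    by_contra hmem
    rw [List.count_eq_zero_of_not_mem hmem] at h
    exact absurd h (by decide)
  exact (cs.isRightInversion_of_mem_rightInvSeq hω hmem).2

theorem nn_eq_one_of_length_mul_lt {w t : W} (ht : cs.IsReflection t)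
    (h : cs.length (w * t) < cs.length w) : nn cs w t = 1 := by
  have h0 : nn cs (w * t) t = 0 := by
    rcases (by decide : ∀ a : ZMod 2, a = 0 ∨ a = 1) (nn cs (w * t) t) with h0 | h0
    · exact h0
    · have := length_mul_lt_of_nn_eq_one cs h0
      rw [mul_assoc, ht.mul_self, mul_one] at this
      omega
  have h3 : w * t * t = w := by rw [mul_assoc, ht.mul_self, mul_one]
  have h4 : t * t * t⁻¹ = t := by rw [ht.mul_self, one_mul, ht.inv]
  have h5 := nn_cocycle cs (w * t) t t
  rw [h3, h4, h0, add_zero, nn_refl_self cs ht] at h5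
  exact h5

/-- The key lemma: if `ℓ(wt) > ℓ(w)` and `ℓ(uwt) < ℓ(uw)`, then
`ℓ(u · wtw⁻¹) < ℓ(u)`. -/
theorem key {t : W} (ht : cs.IsReflection t) {w : W}
    (hw : cs.length w < cs.length (w * t)) (u : W)
    (h : cs.length (u * w * t) < cs.length (u * w)) :
    cs.length (u * (w * t * w⁻¹)) < cs.length u := by
  have h1 : nn cs (u * w) t = 1 := by
    apply nn_eq_one_of_length_mul_lt cs ht
    rwa [mul_assoc] at h ⊢
  rw [nn_cocycle] at h1
  have h2 : nn cs w t = 0 := by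
    rcases (by decide : ∀ a : ZMod 2, a = 0 ∨ a = 1) (nn cs w t) with h0 | h0
    · exact h0
    · have := length_mul_lt_of_nn_eq_one cs h0
      omega
  rw [h2, zero_add] at h1
  exact length_mul_lt_of_nn_eq_one cs h1

theorem aux1 (x' w w' : W) (h : bruhatLE cs w w') :
    ∃ x : W, bruhatLE cs x x' ∧ bruhatLE cs (x * w) (x' * w') := by
  induction h using Relation.ReflTransGen.head_induction_on with
  | refl => exact ⟨x', Relation.ReflTransGen.refl, Relation.ReflTransGen.refl⟩
  | @head a c step rest ih =>
    obtain ⟨t, ht, rfl, hlen⟩ := step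
    obtain ⟨x, hxx', hle⟩ := ih
    by_cases hc : cs.length (x * a * t) < cs.length (x * a)
    · refine ⟨x * (a * t * a⁻¹), ?_, ?_⟩
      · refine Relation.ReflTransGen.trans (Relation.ReflTransGen.single ?_) hxx'
        exact ⟨a * t * a⁻¹, ht.conj a,
          by rw [mul_assoc x (a * t * a⁻¹) (a * t * a⁻¹), (ht.conj a).mul_self, mul_one],
          key cs ht hlen x hc⟩
      · have he : x * (a * t * a⁻¹) * a = x * (a * t) := by group
        rw [he]
        exact hle
    · have hne := ht.length_mul_left_ne (x * a)
      have hlt : cs.length (x * a) < cs.length (x * a * t) := by omega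
      refine ⟨x, hxx',
        Relation.ReflTransGen.trans (Relation.ReflTransGen.single ⟨t, ht, rfl, hlt⟩) ?_⟩
      rw [← mul_assoc] at hle
      exact hle

theorem aux2 (x' w w' : W) (h : bruhatLE cs w w') :
    ∃ x : W, bruhatLE cs x x' ∧ bruhatLE cs (x' * w) (x * w') := by
  induction h using Relation.ReflTransGen.head_induction_on generalizing x' with
  | refl => exact ⟨x', Relation.ReflTransGen.refl, Relation.ReflTransGen.refl⟩
  | @head a c step rest ih =>
    obtain ⟨t, ht, rfl, hlen⟩ := step
    by_cases hc : cs.length (x' * a * t) < cs.length (x' * a)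
    · obtain ⟨x, hxz, hle⟩ := ih (x' * (a * t * a⁻¹))
      refine ⟨x, hxz.trans (Relation.ReflTransGen.single ⟨a * t * a⁻¹, ht.conj a,
        by rw [mul_assoc x' (a * t * a⁻¹) (a * t * a⁻¹), (ht.conj a).mul_self, mul_one],
        key cs ht hlen x' hc⟩), ?_⟩
      have h6 : a * t * a⁻¹ * (a * t) = a := by
        rw [mul_assoc (a * t) a⁻¹ (a * t), inv_mul_cancel_left, mul_assoc, ht.mul_self, mul_one]
      have he : x' * (a * t * a⁻¹) * (a * t) = x' * a := by rw [mul_assoc, h6]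
      rw [he] at hle
      exact hle
    · have hne := ht.length_mul_left_ne (x' * a)
      have hlt : cs.length (x' * a) < cs.length (x' * a * t) := by omega
      obtain ⟨x, hx, hle⟩ := ih x'
      refine ⟨x, hx,
        Relation.ReflTransGen.trans (Relation.ReflTransGen.single ⟨t, ht, rfl, hlt⟩) ?_⟩
      rw [← mul_assoc] at hle
      exact hle

end BruhatAux

/-- If `w ≤ w'`, then (i) there is `x ≤ x'` with `x w ≤ x' w'`, and (ii) there is
`x ≤ x'` with `x' w ≤ x w'`. -/
theorem exists_le_mul_le (cs : CoxeterSystem M W) (x' w w' : W) (h : bruhatLE cs w w') :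
    (∃ x : W, bruhatLE cs x x' ∧ bruhatLE cs (x * w) (x' * w')) ∧
    (∃ x : W, bruhatLE cs x x' ∧ bruhatLE cs (x' * w) (x * w')) :=
  ⟨BruhatAux.aux1 cs x' w w' h, BruhatAux.aux2 cs x' w w' h⟩
end

section
/- Let (W, S) be a Coxeter system, J, K ⊆ S, and δ : W_J → W_K a group isomorphism with δ(J) = K. If w, w' ∈ ᴶW satisfy w ⪯ w' and ℓ(w) = ℓ(w'), then w = w'. -/
open CoxeterSystem

variable {B W : Type*} [Group W] {M : CoxeterMatrix B}

open List

namespace SpecLEAux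

variable {B W : Type*} [Group W] {M : CoxeterMatrix B} (cs : CoxeterSystem M W)

local prefix:100 "s" => cs.simple
local prefix:100 "π" => cs.wordProd
local prefix:100 "ℓ" => cs.length

open Classical in
/-- the standard sign-representation function -/
noncomputable def etaFun (i : B) (x : W × ℤˣ) : W × ℤˣ :=
  (s i * x.1 * s i, if x.1 = s i then -x.2 else x.2)

theorem etaFun_involutive (i : B) : Function.Involutive (etaFun cs i) := by
  rintro ⟨t, ε⟩
  by_cases h : t = s i
  · subst h
    simp [etaFun, cs.simple_mul_simple_cancel_left, cs.simple_mul_simple_cancel_right]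
  · have h2 : ¬ (s i * t * s i = s i) := by
      intro hc
      apply h
      have := congrArg (fun x => s i * x * s i) hc
      simpa [mul_assoc, cs.simple_mul_simple_cancel_left, cs.simple_mul_simple_cancel_right]
        using this
    simp only [etaFun, if_neg h, if_neg h2]
    simp [mul_assoc, cs.simple_mul_simple_cancel_left, cs.simple_mul_simple_cancel_right]
    exact if_neg h2

/-- the sign permutation associated to a simple reflection -/
noncomputable def eta (i : B) : Equiv.Perm (W × ℤˣ) :=
  (etaFun_involutive cs i).toPerm

theorem eta_apply (i : B) (x : W × ℤˣ) : eta cs i x = etaFun cs i x := rfl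

open Classical in
theorem prod_eta_apply (ω : List B) (t : W) (ε : ℤˣ) :
    (List.map (eta cs) ω).prod ⟨t, ε⟩ =
      ⟨π ω * t * (π ω)⁻¹, ε * (-1 : ℤˣ) ^ (List.count t (cs.rightInvSeq ω))⟩ := by
  induction ω generalizing t ε with
  | nil => simp
  | cons i ω ih =>
    have hris : cs.rightInvSeq (i :: ω) = ((π ω)⁻¹ * s i * π ω) :: cs.rightInvSeq ω := rfl
    rw [List.map_cons, List.prod_cons, Equiv.Perm.mul_apply, ih, eta_apply, etaFun]
    have hcond : (π ω * t * (π ω)⁻¹ = s i) ↔ ((π ω)⁻¹ * s i * π ω = t) := by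
      constructor
      · intro h
        rw [← h]; group
      · intro h
        rw [← h]; group
    rw [hris, List.count_cons]
    by_cases h : (π ω)⁻¹ * s i * π ω = t
    · rw [if_pos (hcond.mpr h), if_pos (by exact_mod_cast beq_iff_eq.mpr h)]
      refine Prod.ext ?_ ?_ <;> dsimp only
      · rw [cs.wordProd_cons, mul_inv_rev, cs.inv_simple]; simp [mul_assoc]
      · simp [pow_succ, mul_neg, mul_assoc]
    · rw [if_neg (fun hc => h (hcond.mp hc)), if_neg (by simpa using h), add_zero]
      refine Prod.ext ?_ rfl
      dsimp only
      rw [cs.wordProd_cons, mul_inv_rev, cs.inv_simple]; simp [mul_assoc]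

theorem simple_mul_pow (i i' : B) : ∀ k : ℕ,
    s i' * (s i * s i') ^ k = ((s i * s i') ^ k)⁻¹ * s i'
  | 0 => by simp
  | (k + 1) => by
    have h1 : s i' * (s i * s i') = (s i * s i')⁻¹ * s i' := by
      rw [mul_inv_rev, cs.inv_simple, cs.inv_simple]
      simp [mul_assoc]
    rw [pow_succ' (s i * s i') k, ← mul_assoc, h1, mul_assoc,
      simple_mul_pow i i' k, ← mul_assoc, ← mul_inv_rev, ← pow_succ, ← pow_succ']

theorem ris_alternatingWord (i i' : B) : ∀ n : ℕ,
    cs.rightInvSeq (alternatingWord i i' n) =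
      (List.range n).reverse.map (fun k => (((s i) * (s i')) ^ k)⁻¹ * (s i'))
  | 0 => by simp [alternatingWord]
  | (n + 1) => by
    rw [alternatingWord_succ' i i' n]
    have hris : cs.rightInvSeq ((if Even n then i' else i) :: alternatingWord i i' n) =
        ((π (alternatingWord i i' n))⁻¹ * s (if Even n then i' else i)
          * π (alternatingWord i i' n)) :: cs.rightInvSeq (alternatingWord i i' n) := rfl
    rw [hris, ris_alternatingWord i i' n, List.range_succ]
    simp only [List.reverse_append, List.reverse_cons, List.reverse_nil, List.nil_append,
      List.cons_append, List.map_cons]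
    congr 1
    have hcons : s (if Even n then i' else i) * π (alternatingWord i i' n)
        = π (alternatingWord i i' (n + 1)) := by
      rw [alternatingWord_succ' i i' n, cs.wordProd_cons]
    rw [mul_assoc, hcons, cs.prod_alternatingWord_eq_mul_pow i i' n,
      cs.prod_alternatingWord_eq_mul_pow i i' (n + 1)]
    rcases Nat.even_or_odd n with he | ho
    · obtain ⟨a, ha⟩ := id he
      have h2 : ¬ Even (n + 1) := by simp [Nat.even_add_one, he]
      have h3 : (n + 1) / 2 = n / 2 := by omega
      rw [if_pos he, if_neg h2, one_mul, h3, simple_mul_pow cs i i' (n / 2),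
        ← mul_assoc, ← mul_inv_rev, ← pow_add]
      have h4 : n / 2 + n / 2 = n := by omega
      rw [h4]
    · obtain ⟨a, ha⟩ := id ho
      have h2 : Even (n + 1) := by simp [Nat.even_add_one, Nat.not_even_iff_odd.mpr ho]
      rw [if_neg (Nat.not_even_iff_odd.mpr ho), if_pos h2, one_mul, mul_inv_rev, cs.inv_simple,
        mul_assoc, simple_mul_pow cs i i' ((n + 1) / 2), ← mul_assoc, ← mul_inv_rev, ← pow_add]
      have h4 : (n + 1) / 2 + n / 2 = n := by omega
      rw [h4]

open Classical in
theorem count_ris_braid_even (i i' : B) (t : W) :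
    Even (List.count t (cs.rightInvSeq (alternatingWord i i' (2 * M i i')))) := by
  rw [ris_alternatingWord, List.map_reverse, List.count_reverse, two_mul, List.range_add,
    List.map_append, List.count_append, List.map_map]
  have : ((List.range (M i i')).map ((fun k => ((s i * s i') ^ k)⁻¹ * s i') ∘ (M i i' + ·)))
      = (List.range (M i i')).map (fun k => ((s i * s i') ^ k)⁻¹ * s i') := by
    apply List.map_congr_left
    intro k _
    simp only [Function.comp_apply, pow_add, cs.simple_mul_simple_pow i i', one_mul]
  rw [this]
  exact Even.add_self _

theorem eta_pow_eq_prod (i i' : B) : ∀ m : ℕ,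
    (eta cs i * eta cs i') ^ m = (List.map (eta cs) (alternatingWord i i' (2 * m))).prod
  | 0 => by simp [alternatingWord]
  | (m + 1) => by
    have h1 : 2 * (m + 1) = (2 * m) + 1 + 1 := by omega
    have h2 : alternatingWord i i' (2 * m + 1 + 1) = i :: i' :: alternatingWord i i' (2 * m) := by
      rw [alternatingWord_succ' i i' (2 * m + 1), alternatingWord_succ' i i' (2 * m)]
      have : ¬ Even (2 * m + 1) := by simp [Nat.even_add_one, parity_simps]
      rw [if_neg this, if_pos (by simp [parity_simps])]
    rw [h1, h2, List.map_cons, List.map_cons, List.prod_cons, List.prod_cons,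
      ← eta_pow_eq_prod i i' m, pow_succ' (eta cs i * eta cs i') m, mul_assoc]

theorem eta_liftable : M.IsLiftable (eta cs) := by
  intro i i'
  rw [eta_pow_eq_prod cs i i' (M i i')]
  classical
  refine Equiv.ext ?_
  rintro ⟨t, ε⟩
  rw [prod_eta_apply]
  have hπ : π (alternatingWord i i' (2 * M i i')) = 1 := by
    rw [cs.prod_alternatingWord_eq_mul_pow, if_pos (by simp [parity_simps]),
      one_mul, Nat.mul_div_cancel_left _ (by norm_num : 0 < 2),
      cs.simple_mul_simple_pow i i']
  rw [hπ, (count_ris_braid_even cs i i' t).neg_one_pow]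
  simp

/-- The sign representation of the Coxeter group -/
noncomputable def mu : W →* Equiv.Perm (W × ℤˣ) := cs.lift ⟨eta cs, eta_liftable cs⟩

theorem mu_simple (i : B) : mu cs (s i) = eta cs i := cs.lift_apply_simple _ i

theorem mu_wordProd (ω : List B) : mu cs (π ω) = (List.map (eta cs) ω).prod := by
  induction ω with
  | nil => simp [cs.wordProd_nil]
  | cons i ω ih => rw [cs.wordProd_cons, map_mul, ih, List.map_cons, List.prod_cons, mu_simple]

theorem mu_apply (w : W) (t : W) (ε : ℤˣ) :
    mu cs w ⟨t, ε⟩ = ⟨w * t * w⁻¹, ε * (mu cs w ⟨t, 1⟩).2⟩ := by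
  classical
  obtain ⟨ω, _, rfl⟩ := cs.exists_reduced_word w
  rw [mu_wordProd, prod_eta_apply, prod_eta_apply, one_mul]

open Classical in
theorem mu_sgn_eq_count (ω : List B) (t : W) :
    (mu cs (π ω) ⟨t, 1⟩).2 = (-1 : ℤˣ) ^ (List.count t (cs.rightInvSeq ω)) := by
  rw [mu_wordProd, prod_eta_apply, one_mul]

theorem mu_isReflection (t : W) (ht : cs.IsReflection t) (ε : ℤˣ) :
    mu cs t ⟨t, ε⟩ = ⟨t, -ε⟩ := by
  obtain ⟨v, i, rfl⟩ := ht
  set t := v * s i * v⁻¹ with hts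
  have hvt : v⁻¹ * t * v⁻¹⁻¹ = s i := by rw [hts]; group
  set c₁ : ℤˣ := (mu cs v⁻¹ ⟨t, 1⟩).2 with hc₁
  set c₂ : ℤˣ := (mu cs v ⟨s i, 1⟩).2 with hc₂
  have step1 : ∀ δ : ℤˣ, mu cs v⁻¹ ⟨t, δ⟩ = ⟨s i, δ * c₁⟩ := by
    intro δ
    rw [mu_apply, hvt]
  have step2 : ∀ δ : ℤˣ, mu cs v ⟨s i, δ⟩ = ⟨t, δ * c₂⟩ := by
    intro δ
    rw [mu_apply, hts]
  have hid : mu cs v (mu cs v⁻¹ ⟨t, ε⟩) = ⟨t, ε⟩ := by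
    rw [← Equiv.Perm.mul_apply, ← map_mul, mul_inv_cancel, map_one, Equiv.Perm.one_apply]
  rw [step1 ε, step2 (ε * c₁)] at hid
  have hc : c₁ * c₂ = 1 := by
    have := (Prod.ext_iff.mp hid).2
    dsimp at this
    rw [mul_assoc] at this
    exact (mul_eq_left.mp this)
  have expand : mu cs t = mu cs v * mu cs (s i) * mu cs v⁻¹ := by
    rw [hts, map_mul, map_mul]
  rw [expand, Equiv.Perm.mul_apply, Equiv.Perm.mul_apply, step1 ε, mu_simple, eta_apply, etaFun]
  classical
  rw [if_pos rfl]
  dsimp only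
  rw [cs.simple_mul_simple_cancel_right]
  rw [step2 (-(ε * c₁))]
  rw [neg_mul, mul_assoc, hc, mul_one]

open Classical in
theorem mem_rightInvSeq_of_isRightInversion {ω : List B} (hω : cs.IsReduced ω) {t : W}
    (ht : cs.IsReflection t) (hlt : ℓ ((π ω) * t) < ℓ (π ω)) : t ∈ cs.rightInvSeq ω := by
  set w := π ω with hw
  set v := w * t with hv
  have hvt : v * t = w := by rw [hv, mul_assoc, ht.mul_self, mul_one]
  obtain ⟨ωv, hlen, hv_eq⟩ := cs.exists_reduced_word v
  have hωv : cs.IsReduced ωv := by exact hlen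
  have htnot : t ∉ cs.rightInvSeq ωv := by
    intro hmem
    have := (cs.isRightInversion_of_mem_rightInvSeq hωv hmem).2
    rw [← hv_eq, hvt] at this
    omega
  have hcount : (mu cs v ⟨t, 1⟩).2 = 1 := by
    rw [hv_eq, mu_sgn_eq_count, List.count_eq_zero_of_not_mem htnot, pow_zero]
  have hsgnw : (mu cs w ⟨t, 1⟩).2 = -1 := by
    have h5 : mu cs w ⟨t, 1⟩ = mu cs v (mu cs t ⟨t, 1⟩) := by
      rw [← Equiv.Perm.mul_apply, ← map_mul, hvt]
    rw [mu_isReflection cs t ht, mu_apply cs v t (-1), hcount] at h5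
    rw [h5]
    simp
  by_contra hnot
  have : (mu cs (π ω) ⟨t, 1⟩).2 = 1 := by
    rw [mu_sgn_eq_count, List.count_eq_zero_of_not_mem hnot, pow_zero]
  rw [← hw, hsgnw] at this
  exact absurd this (by decide)

theorem exchange_left {ω : List B} (hω : cs.IsReduced ω) {t : W}
    (ht : cs.IsReflection t) (hlt : ℓ (t * (π ω)) < ℓ (π ω)) :
    ∃ j < ω.length, t * (π ω) = π (ω.eraseIdx j) := by
  have hrev : cs.IsReduced ω.reverse := (cs.isReduced_reverse_iff ω).mpr hω
  have hlt' : ℓ ((π ω.reverse) * t) < ℓ (π ω.reverse) := by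
    rw [cs.wordProd_reverse]
    have h1 : (π ω)⁻¹ * t = (t * π ω)⁻¹ := by rw [mul_inv_rev, ht.inv]
    rw [h1, cs.length_inv, cs.length_inv]
    exact hlt
  have hmem := mem_rightInvSeq_of_isRightInversion cs hrev ht hlt'
  rw [cs.rightInvSeq_reverse, List.mem_reverse] at hmem
  obtain ⟨j, hj, hjt⟩ := List.mem_iff_getElem.mp hmem
  rw [cs.length_leftInvSeq] at hj
  refine ⟨j, hj, ?_⟩
  rw [← hjt, ← List.getD_eq_getElem _ 1 (by rw [cs.length_leftInvSeq]; exact hj),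
    cs.getD_leftInvSeq_mul_wordProd]

theorem wordProd_mem_closure {J : Set W} (ω : List B) (h : ∀ i ∈ ω, s i ∈ J) :
    π ω ∈ Subgroup.closure J := by
  induction ω with
  | nil => rw [cs.wordProd_nil]; exact one_mem _
  | cons i ω ih =>
    rw [cs.wordProd_cons]
    exact mul_mem (Subgroup.subset_closure (h i List.mem_cons_self))
      (ih fun j hj => h j (List.mem_cons_of_mem _ hj))

theorem exists_jword {J : Set W} (hJ : J ⊆ Set.range cs.simple) {u : W}
    (hu : u ∈ Subgroup.closure J) :
    ∃ ω : List B, (∀ i ∈ ω, s i ∈ J) ∧ π ω = u := by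
  induction hu using Subgroup.closure_induction with
  | mem x hx =>
    obtain ⟨i, hi⟩ := hJ hx
    exact ⟨[i], by simpa [hi] using hx, by rw [cs.wordProd_singleton, hi]⟩
  | one => exact ⟨[], by simp, cs.wordProd_nil⟩
  | mul x y hx hy ihx ihy =>
    obtain ⟨ω₁, h₁, rfl⟩ := ihx
    obtain ⟨ω₂, h₂, rfl⟩ := ihy
    refine ⟨ω₁ ++ ω₂, ?_, cs.wordProd_append ω₁ ω₂⟩
    intro i hi
    rcases List.mem_append.mp hi with hh | hh
    exacts [h₁ i hh, h₂ i hh]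
  | inv x hx ihx =>
    obtain ⟨ω, h₁, rfl⟩ := ihx
    exact ⟨ω.reverse, fun i hi => h₁ i (List.mem_reverse.mp hi), cs.wordProd_reverse ω⟩

theorem exists_reduced_jword (J : Set W) : ∀ n (ω : List B), ω.length ≤ n →
    (∀ i ∈ ω, s i ∈ J) →
    ∃ ω' : List B, cs.IsReduced ω' ∧ (∀ i ∈ ω', s i ∈ J) ∧ π ω' = π ω
  | 0, ω, hlen, hmem => by
    have hnil : ω = [] := List.eq_nil_of_length_eq_zero (Nat.le_zero.mp hlen)
    subst hnil
    exact ⟨[], by simp [CoxeterSystem.IsReduced], hmem, rfl⟩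
  | (n+1), ω, hlen, hmem => by
    by_cases hred : cs.IsReduced ω
    · exact ⟨ω, hred, hmem, rfl⟩
    · cases ω with
      | nil => exact absurd (by simp [CoxeterSystem.IsReduced]) hred
      | cons i ω' =>
        have hlen' : ω'.length ≤ n := by simpa using hlen
        by_cases h' : cs.IsReduced ω'
        · have hne : ℓ (s i * π ω') < ℓ (π ω') := by
            rcases cs.length_simple_mul (π ω') i with hp | hm
            · exfalso
              apply hred
              show ℓ (π (i :: ω')) = (i :: ω').length
              rw [cs.wordProd_cons, hp, h', List.length_cons]
            · omega
          obtain ⟨j, hj, heq⟩ := exchange_left cs h' (cs.isReflection_simple i) hne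
          have hlen2 : (ω'.eraseIdx j).length ≤ n := by
            have h6 := List.length_eraseIdx_of_lt hj
            omega
          obtain ⟨ω'', hred'', hmem'', heq''⟩ := exists_reduced_jword J n (ω'.eraseIdx j) hlen2
            (fun k hk => hmem k (List.mem_cons_of_mem _ (List.eraseIdx_subset hk)))
          refine ⟨ω'', hred'', hmem'', ?_⟩
          rw [heq'', ← heq, cs.wordProd_cons]
        · obtain ⟨ρ, hρred, hρmem, hρeq⟩ := exists_reduced_jword J n ω' hlen'
            (fun k hk => hmem k (List.mem_cons_of_mem _ hk))
          have hρlen : ρ.length < ω'.length := by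
            have h1 : ℓ (π ω') ≤ ω'.length := cs.length_wordProd_le ω'
            have h2 : ℓ (π ω') ≠ ω'.length := h'
            have h3 : ℓ (π ρ) = ρ.length := hρred
            rw [hρeq] at h3
            omega
          obtain ⟨ω'', hred'', hmem'', heq''⟩ := exists_reduced_jword J n (i :: ρ)
            (by simp only [List.length_cons]; omega)
            (by
              intro k hk
              rcases List.mem_cons.mp hk with rfl | hh
              · exact hmem k List.mem_cons_self
              · exact hρmem k hh)
          refine ⟨ω'', hred'', hmem'', ?_⟩
          rw [heq'', cs.wordProd_cons, cs.wordProd_cons, hρeq]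

theorem exists_reduced_jword' {J : Set W} (hJ : J ⊆ Set.range cs.simple) {u : W}
    (hu : u ∈ Subgroup.closure J) :
    ∃ ω, cs.IsReduced ω ∧ (∀ i ∈ ω, s i ∈ J) ∧ π ω = u := by
  obtain ⟨ω₀, hmem₀, hprod₀⟩ := exists_jword cs hJ hu
  obtain ⟨ω, h1, h2, h3⟩ := exists_reduced_jword cs J ω₀.length ω₀ le_rfl hmem₀
  exact ⟨ω, h1, h2, h3.trans hprod₀⟩

theorem exists_peel {J : Set W} (hJ : J ⊆ Set.range cs.simple) {u : W}
    (hu : u ∈ Subgroup.closure J) (hne : u ≠ 1) :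
    ∃ i : B, s i ∈ J ∧ ∃ u' ∈ Subgroup.closure J, u = s i * u' ∧ ℓ u' + 1 = ℓ u := by
  obtain ⟨ω, hred, hmem, hprod⟩ := exists_reduced_jword' cs hJ hu
  cases ω with
  | nil => exact absurd (by rw [← hprod, cs.wordProd_nil]) hne
  | cons i ω' =>
    refine ⟨i, hmem i List.mem_cons_self, π ω',
      wordProd_mem_closure cs ω' (fun k hk => hmem k (List.mem_cons_of_mem _ hk)), ?_, ?_⟩
    · rw [← hprod, cs.wordProd_cons]
    · have h1 : cs.IsReduced ω' := by simpa using hred.drop 1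
      have h2 : ℓ (π ω') = ω'.length := h1
      have h3 : ℓ (π (i :: ω')) = ω'.length + 1 := by
        rw [hred]; simp
      rw [← hprod, h2, h3]

theorem exists_decomp {J : Set W} (hJ : J ⊆ Set.range cs.simple) :
    ∀ n (v : W), ℓ v ≤ n →
      ∃ b ∈ Subgroup.closure J, ∃ x, x ∈ minLeft cs J ∧ v = b * x ∧ ℓ x ≤ ℓ v := by
  intro n
  induction n with
  | zero =>
    intro v hv
    refine ⟨1, one_mem _, v, ?_, (one_mul v).symm, le_rfl⟩
    intro t ht
    obtain ⟨i, hi⟩ := hJ ht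
    subst hi
    have h2 := cs.length_simple_mul v i
    have h3 := cs.length_simple_mul_ne v i
    omega
  | succ n ih =>
    intro v hv
    by_cases hmin : v ∈ minLeft cs J
    · exact ⟨1, one_mem _, v, hmin, (one_mul v).symm, le_rfl⟩
    · simp only [minLeft, Set.mem_setOf_eq] at hmin
      push_neg at hmin
      obtain ⟨t, ht, hlen⟩ := hmin
      obtain ⟨i, hi⟩ := hJ ht
      subst hi
      have hne := cs.length_simple_mul_ne v i
      have hlt : ℓ (s i * v) < ℓ v := by omega
      obtain ⟨b, hb, x, hx, heq, hxle⟩ := ih (s i * v) (by omega)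
      refine ⟨s i * b, mul_mem (Subgroup.subset_closure ht) hb, x, hx, ?_, by omega⟩
      rw [mul_assoc, ← heq, cs.simple_mul_simple_cancel_left]

theorem length_closure_mul {J : Set W} (hJ : J ⊆ Set.range cs.simple) :
    ∀ n (w : W), ℓ w ≤ n → w ∈ minLeft cs J →
      ∀ m (u : W), u ∈ Subgroup.closure J → ℓ u ≤ m → ℓ (u * w) = ℓ u + ℓ w := by
  intro n
  induction n with
  | zero =>
    intro w hw _ m u _ _
    have h1 : w = 1 := cs.length_eq_zero_iff.mp (Nat.le_zero.mp hw)
    subst h1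
    simp
  | succ n ihw =>
    intro w hw hwmin m
    induction m with
    | zero =>
      intro u hu hul
      have h1 : u = 1 := cs.length_eq_zero_iff.mp (Nat.le_zero.mp hul)
      subst h1
      simp
    | succ m ihu =>
      intro u hu hul
      by_cases hu1 : u = 1
      · subst hu1; simp
      · have hwf : ∀ t ∈ J, ℓ w < ℓ (t * w) := hwmin
        obtain ⟨i₀, hi₀J, u₁, hu₁, hupeel, hlen₁⟩ := exists_peel cs hJ hu hu1
        have hiu : ℓ (u₁ * w) = ℓ u₁ + ℓ w := ihu u₁ hu₁ (by omega)
        have hlen₂ : ℓ (s i₀ * u₁) = ℓ u₁ + 1 := by rw [← hupeel]; omega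
        rcases cs.length_simple_mul (u₁ * w) i₀ with hp | hm
        · rw [hupeel, mul_assoc, hp, hiu]
          omega
        · exfalso
          have hm' : ℓ (s i₀ * (u₁ * w)) < ℓ (u₁ * w) := by omega
          obtain ⟨ω₁, hω₁red, hω₁mem, hω₁prod⟩ := exists_reduced_jword' cs hJ hu₁
          obtain ⟨ω₂, hω₂len, hω₂prod⟩ := cs.exists_reduced_word w
          have hl₁ : ℓ u₁ = ω₁.length := by rw [← hω₁prod]; exact hω₁red
          have hprodv : π (ω₁ ++ ω₂) = u₁ * w := by
            rw [cs.wordProd_append, hω₁prod, ← hω₂prod]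
          have hωred : cs.IsReduced (ω₁ ++ ω₂) := by
            show ℓ (π (ω₁ ++ ω₂)) = (ω₁ ++ ω₂).length
            rw [hprodv, hiu, List.length_append, ← hl₁, hω₂prod, hω₂len.eq]
          have hm'' : ℓ (s i₀ * π (ω₁ ++ ω₂)) < ℓ (π (ω₁ ++ ω₂)) := by
            rw [hprodv]; exact hm'
          obtain ⟨j, hj, heq⟩ := exchange_left cs hωred (cs.isReflection_simple i₀) hm''
          rw [hprodv] at heq
          rcases lt_or_ge j ω₁.length with hcase | hcase
          · rw [List.eraseIdx_append_of_lt_length hcase, cs.wordProd_append, ← hω₂prod] at heq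
            have heq2 : s i₀ * u₁ = π (ω₁.eraseIdx j) := by
              have h10 : (s i₀ * u₁) * w = π (ω₁.eraseIdx j) * w := by
                rw [mul_assoc]; exact heq
              exact mul_right_cancel h10
            have h5 := cs.length_wordProd_le (ω₁.eraseIdx j)
            rw [← heq2, List.length_eraseIdx_of_lt hcase] at h5
            omega
          · rw [List.eraseIdx_append_of_length_le hcase, cs.wordProd_append, hω₁prod] at heq
            have h8 : j - ω₁.length < ω₂.length := by
              rw [List.length_append] at hj; omega
            have h9 := cs.length_wordProd_le (ω₂.eraseIdx (j - ω₁.length))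
            rw [List.length_eraseIdx_of_lt h8] at h9
            have hW8len : ℓ (π (ω₂.eraseIdx (j - ω₁.length))) < ℓ w := by
              have := hω₂len.eq; rw [← hω₂prod] at this; omega
            have hweq : w = (u₁⁻¹ * s i₀ * u₁) * π (ω₂.eraseIdx (j - ω₁.length)) := by
              rw [mul_assoc, mul_assoc, ← heq, cs.simple_mul_simple_cancel_left,
                inv_mul_cancel_left]
            obtain ⟨b, hb, x, hxmin, hW8decomp, hxle⟩ :=
              exists_decomp cs hJ (ℓ (π (ω₂.eraseIdx (j - ω₁.length)))) _ le_rfl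
            have hxlt : ℓ x < ℓ w := lt_of_le_of_lt hxle hW8len
            have hcmem : (u₁⁻¹ * s i₀ * u₁) * b ∈ Subgroup.closure J :=
              mul_mem (mul_mem (mul_mem (inv_mem hu₁) (Subgroup.subset_closure hi₀J)) hu₁) hb
            have hwcx : w = ((u₁⁻¹ * s i₀ * u₁) * b) * x := by
              rw [hweq, hW8decomp]; group
            by_cases hcone : (u₁⁻¹ * s i₀ * u₁) * b = 1
            · rw [hcone, one_mul] at hwcx
              rw [← hwcx] at hxlt
              omega
            · obtain ⟨i₁, hi₁J, c₁, hc₁, hcpeel, hlenc₁⟩ := exists_peel cs hJ hcmem hcone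
              have hLw : ℓ w = ℓ ((u₁⁻¹ * s i₀ * u₁) * b) + ℓ x := by
                rw [hwcx]
                exact ihw x (by omega) hxmin (ℓ ((u₁⁻¹ * s i₀ * u₁) * b)) _ hcmem le_rfl
              have hs₁w : s i₁ * w = c₁ * x := by
                rw [hwcx, hcpeel, mul_assoc, cs.simple_mul_simple_cancel_left]
              have hlc₁x : ℓ (c₁ * x) = ℓ c₁ + ℓ x := ihw x (by omega) hxmin (ℓ c₁) c₁ hc₁ le_rfl
              have hcontra := hwf (s i₁) hi₁J
              rw [hs₁w, hlc₁x] at hcontra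
              omega

theorem length_closure_mul' {J : Set W} (hJ : J ⊆ Set.range cs.simple) {w u : W}
    (hwmin : w ∈ minLeft cs J) (hu : u ∈ Subgroup.closure J) :
    ℓ (u * w) = ℓ u + ℓ w :=
  length_closure_mul cs hJ (ℓ w) w le_rfl hwmin (ℓ u) u hu le_rfl

theorem final_peel {J : Set W} (hJ : J ⊆ Set.range cs.simple) :
    ∀ n (u : W), u ∈ Subgroup.closure J → ℓ u ≤ n → ∀ (z w w' : W), w ∈ minLeft cs J →
      w' ∈ minLeft cs J → ℓ w = ℓ w' → ℓ z ≤ ℓ u → u * w' = w * z → w = w' := by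
  intro n
  induction n with
  | zero =>
    intro u _ hun z w w' _ _ _ hz heq
    have hu1 : u = 1 := cs.length_eq_zero_iff.mp (Nat.le_zero.mp hun)
    subst hu1
    have hz1 : z = 1 := cs.length_eq_zero_iff.mp (by simpa using hz)
    subst hz1
    rw [one_mul, mul_one] at heq
    exact heq.symm
  | succ n ih =>
    intro u hu hun z w w' hw hw' hlww' hz heq
    by_cases hu1 : u = 1
    · subst hu1
      have hz1 : z = 1 := cs.length_eq_zero_iff.mp (by simpa using hz)
      subst hz1
      rw [one_mul, mul_one] at heq
      exact heq.symm
    · have hwf : ∀ t ∈ J, ℓ w < ℓ (t * w) := hw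
      have h1 : ℓ (u * w') = ℓ u + ℓ w' := length_closure_mul' cs hJ hw' hu
      have h2 : ℓ (w * z) = ℓ u + ℓ w' := by rw [← heq, h1]
      have h3 : ℓ (w * z) ≤ ℓ w + ℓ z := cs.length_mul_le w z
      have h4 : ℓ z = ℓ u := by omega
      have h5 : ℓ (w * z) = ℓ w + ℓ z := by omega
      obtain ⟨i₀, hi₀J, u₁, hu₁, hupeel, hlen₁⟩ := exists_peel cs hJ hu hu1
      have h6 : s i₀ * (w * z) = u₁ * w' := by
        rw [← heq, hupeel, mul_assoc, cs.simple_mul_simple_cancel_left]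
      have h7 : ℓ (u₁ * w') = ℓ u₁ + ℓ w' := length_closure_mul' cs hJ hw' hu₁
      have h8 : ℓ (s i₀ * (w * z)) < ℓ (w * z) := by
        rw [h6, h7]
        omega
      obtain ⟨ω₁, hω₁len, hω₁prod⟩ := cs.exists_reduced_word w
      obtain ⟨ω₂, hω₂len, hω₂prod⟩ := cs.exists_reduced_word z
      have hprodwz : π (ω₁ ++ ω₂) = w * z := by
        rw [cs.wordProd_append, ← hω₁prod, ← hω₂prod]
      have hred : cs.IsReduced (ω₁ ++ ω₂) := by
        show ℓ (π (ω₁ ++ ω₂)) = (ω₁ ++ ω₂).length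
        rw [hprodwz, h5, List.length_append, hω₁prod, hω₁len.eq, hω₂prod, hω₂len.eq]
      have h8' : ℓ (s i₀ * π (ω₁ ++ ω₂)) < ℓ (π (ω₁ ++ ω₂)) := by
        rw [hprodwz]; exact h8
      obtain ⟨j, hj, hex⟩ := exchange_left cs hred (cs.isReflection_simple i₀) h8'
      rw [hprodwz] at hex
      rcases lt_or_ge j ω₁.length with hcase | hcase
      · exfalso
        rw [List.eraseIdx_append_of_lt_length hcase, cs.wordProd_append, ← hω₂prod] at hex
        have h9 : s i₀ * w = π (ω₁.eraseIdx j) := by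
          have h10 : (s i₀ * w) * z = π (ω₁.eraseIdx j) * z := by
            rw [mul_assoc]; exact hex
          exact mul_right_cancel h10
        have h11 := cs.length_wordProd_le (ω₁.eraseIdx j)
        rw [← h9, List.length_eraseIdx_of_lt hcase, ← hω₁len.eq, ← hω₁prod] at h11
        have h12 := hwf (s i₀) hi₀J
        omega
      · rw [List.eraseIdx_append_of_length_le hcase, cs.wordProd_append, ← hω₁prod] at hex
        have h13 : j - ω₁.length < ω₂.length := by
          rw [List.length_append] at hj; omega
        have h14 := cs.length_wordProd_le (ω₂.eraseIdx (j - ω₁.length))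
        rw [List.length_eraseIdx_of_lt h13] at h14
        refine ih u₁ hu₁ (by omega) (π (ω₂.eraseIdx (j - ω₁.length))) w w' hw hw' hlww'
          (by have := hω₂len.eq; rw [← hω₂prod] at this; omega) ?_
        rw [← hex]
        exact h6.symm

theorem delta_one {J K : Set W} {δ : W → W} (hδ : IsParabolicIso J K δ) : δ 1 = 1 := by
  have h := hδ.map_mul 1 (one_mem _) 1 (one_mem _)
  rw [one_mul] at h
  exact mul_eq_left.mp h.symm

theorem length_delta_le {J K : Set W} {δ : W → W} (hδ : IsParabolicIso J K δ)
    (hJ : J ⊆ Set.range cs.simple) (hK : K ⊆ Set.range cs.simple) {u : W}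
    (hu : u ∈ Subgroup.closure J) : ℓ (δ u) ≤ ℓ u := by
  have key : ∀ ω : List B, (∀ i ∈ ω, s i ∈ J) → ℓ (δ (π ω)) ≤ ω.length := by
    intro ω
    induction ω with
    | nil =>
      intro _
      rw [cs.wordProd_nil, delta_one hδ]
      simp
    | cons i ω ih =>
      intro hmem
      rw [cs.wordProd_cons, hδ.map_mul _ (Subgroup.subset_closure (hmem i List.mem_cons_self))
        _ (wordProd_mem_closure cs ω (fun k hk => hmem k (List.mem_cons_of_mem _ hk)))]
      have h1 : δ (s i) ∈ K := by
        rw [← hδ.image_eq]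
        exact Set.mem_image_of_mem δ (hmem i List.mem_cons_self)
      obtain ⟨k, hk⟩ := hK h1
      have h2 : ℓ (δ (s i)) = 1 := by rw [← hk, cs.length_simple]
      have h3 := cs.length_mul_le (δ (s i)) (δ (π ω))
      have h4 := ih (fun k hk => hmem k (List.mem_cons_of_mem _ hk))
      simp only [List.length_cons]
      omega
  obtain ⟨ω, hred, hmem, hprod⟩ := exists_reduced_jword' cs hJ hu
  have h5 := key ω hmem
  rw [hprod] at h5
  have h6 : ℓ (π ω) = ω.length := hred
  rw [hprod] at h6
  omega

theorem bruhat_le_cases {u v : W} (h : bruhatLE cs u v) : u = v ∨ ℓ u < ℓ v := by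
  induction h with
  | refl => exact Or.inl rfl
  | tail _ hbc ihab =>
    obtain ⟨t, -, -, hlt⟩ := hbc
    rcases ihab with rfl | hlt2
    · exact Or.inr hlt
    · exact Or.inr (lt_trans hlt2 hlt)

end SpecLEAux

/-- If `w, w' ∈ ᴶW` satisfy `w ⪯ w'` and `ℓ(w) = ℓ(w')`, then `w = w'`. -/
theorem eq_of_specLE_of_length_eq (cs : CoxeterSystem M W) (J K : Set W)
    (hJ : J ⊆ Set.range cs.simple) (hK : K ⊆ Set.range cs.simple)
    (δ : W → W) (hδ : IsParabolicIso J K δ)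
    (w w' : W) (hw : w ∈ minLeft cs J) (hw' : w' ∈ minLeft cs J)
    (h : specLE cs J δ w w') (hl : cs.length w = cs.length w') :
    w = w' := by
  obtain ⟨u, hu, hb⟩ := h
  have hzle : cs.length (δ u) ≤ cs.length u := SpecLEAux.length_delta_le cs hδ hJ hK hu
  have h1 : cs.length (u⁻¹ * w) = cs.length u + cs.length w := by
    have h0 := SpecLEAux.length_closure_mul' cs hJ hw (inv_mem hu)
    rwa [cs.length_inv] at h0
  have h3 := cs.length_mul_le (u⁻¹ * w * δ u) (δ u)⁻¹
  have h4 : (u⁻¹ * w * δ u) * (δ u)⁻¹ = u⁻¹ * w := by group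
  rw [h4, cs.length_inv] at h3
  have h5 : cs.length w ≤ cs.length (u⁻¹ * w * δ u) := by omega
  rcases SpecLEAux.bruhat_le_cases cs hb with heqx | hltx
  · have hx : u * w' = w * δ u := by rw [← heqx]; group
    exact SpecLEAux.final_peel cs hJ (cs.length u) u hu le_rfl (δ u) w w' hw hw' hl hzle hx
  · exfalso
    rw [← hl] at hltx
    omega
end
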